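/- arXiv:1508.00792 — 9 statements merged into one kernel-verified Lean document; each statement's English description precedes it below -/
import Mathlib

section
/- Let L be an N×N Hermitian positive definite complex matrix. Then the matrix L⁻¹ + Δ(L) is Hermitian positive definite, where Δ(L) = (1/n)∑_{i=1}^n Uᵢ(Uᵢ*LUᵢ)⁻¹Uᵢ* − (I+L)⁻¹. (Inductive step of Proposition 1.) -/
open Matrix
open scoped ComplexOrder

/-- Δ(L) = (1/n)∑ᵢ Uᵢ(Uᵢ*LUᵢ)⁻¹Uᵢ* − (I+L)⁻¹. -/
noncomputable def Delta {N n : ℕ} {k : Fin n → ℕ}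
    (U : (i : Fin n) → Matrix (Fin N) (Fin (k i)) ℂ)
    (L : Matrix (Fin N) (Fin N) ℂ) : Matrix (Fin N) (Fin N) ℂ :=
  (n : ℂ)⁻¹ • (∑ i, U i * ((U i)ᴴ * L * U i)⁻¹ * (U i)ᴴ) - (1 + L)⁻¹

lemma aux_smul_posSemidef {N : ℕ} {M : Matrix (Fin N) (Fin N) ℂ} (hM : M.PosSemidef)
    {r : ℝ} (hr : 0 ≤ r) : ((r : ℂ) • M).PosSemidef := by
  refine Matrix.PosSemidef.of_dotProduct_mulVec_nonneg ?_ ?_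
  · show ((r : ℂ) • M)ᴴ = _
    rw [conjTranspose_smul, hM.1.eq]
    simp [Complex.conj_ofReal]
  · intro x
    rw [smul_mulVec, dotProduct_smul]
    exact smul_nonneg (by exact_mod_cast hr) (hM.dotProduct_mulVec_nonneg x)

/-- Inductive step of Proposition 1: if L is Hermitian positive definite then so is
L⁻¹ + Δ(L). -/
theorem inv_add_delta_posDef {N n : ℕ} (hN : 0 < N) (hn : 0 < n)
    {k : Fin n → ℕ} (hk1 : ∀ i, 1 ≤ k i) (hkN : ∀ i, k i ≤ N)
    (U : (i : Fin n) → Matrix (Fin N) (Fin (k i)) ℂ)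
    (hU : ∀ i, (U i)ᴴ * U i = 1)
    (L : Matrix (Fin N) (Fin N) ℂ) (hL : L.PosDef) :
    (L⁻¹ + Delta U L).PosDef := by
  -- U i preserves nonzero vectors
  have hUinj : ∀ i (x : Fin (k i) → ℂ), x ≠ 0 → U i *ᵥ x ≠ 0 := by
    intro i x hx h
    apply hx
    have h2 := congrArg (fun v => (U i)ᴴ *ᵥ v) h
    simpa [mulVec_mulVec, hU i] using h2
  -- each compressed matrix is positive definite
  have hM : ∀ i, ((U i)ᴴ * L * U i).PosDef := by
    intro i
    refine Matrix.PosDef.of_dotProduct_mulVec_pos (isHermitian_conjTranspose_mul_mul _ hL.1) fun x hx => ?_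
    simpa only [star_mulVec, dotProduct_mulVec, vecMul_vecMul] using
      hL.dotProduct_mulVec_pos (hUinj i x hx)
  -- sum of the sandwiched inverses is PSD
  have hsum : (∑ i, U i * ((U i)ᴴ * L * U i)⁻¹ * (U i)ᴴ).PosSemidef := by
    refine Finset.sum_induction _ _ (fun A B hA hB => hA.add hB) Matrix.PosSemidef.zero ?_
    intro i _
    exact ((hM i).inv.posSemidef).mul_mul_conjTranspose_same (U i)
  have hsmul : ((n : ℂ)⁻¹ • ∑ i, U i * ((U i)ᴴ * L * U i)⁻¹ * (U i)ᴴ).PosSemidef := by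
    have : ((n : ℂ))⁻¹ = (((n : ℝ)⁻¹ : ℝ) : ℂ) := by push_cast; ring
    rw [this]
    exact aux_smul_posSemidef hsum (by positivity)
  -- L⁻¹ - (1+L)⁻¹ is positive definite
  have h1L : (1 + L).PosDef := Matrix.PosDef.one.add_posSemidef hL.posSemidef
  have hLsq : (L + L * L).PosDef := by
    have : (L * L).PosSemidef := by
      have h := Matrix.PosSemidef.one.conjTranspose_mul_mul_same (m := Fin N) L
      simpa [hL.1.eq] using h
    exact hL.add_posSemidef this
  have heq : L⁻¹ - (1 + L)⁻¹ = (L + L * L)⁻¹ := by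
    have h1 : L + L * L = L * (1 + L) := by noncomm_ring
    rw [h1, Matrix.mul_inv_rev]
    have h2 : (1 + L)⁻¹ * (1 + L) = 1 := Matrix.nonsing_inv_mul _ h1L.det_pos.ne'.isUnit
    have h3 : L * L⁻¹ = 1 := Matrix.mul_nonsing_inv _ hL.det_pos.ne'.isUnit
    calc L⁻¹ - (1 + L)⁻¹
        = (1 + L)⁻¹ * (1 + L) * L⁻¹ - (1 + L)⁻¹ * (L * L⁻¹) := by rw [h2, h3]; simp
      _ = (1 + L)⁻¹ * L⁻¹ := by noncomm_ring
  have hdiff : (L⁻¹ - (1 + L)⁻¹).PosDef := heq ▸ hLsq.inv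
  have : L⁻¹ + Delta U L =
      ((n : ℂ)⁻¹ • ∑ i, U i * ((U i)ᴴ * L * U i)⁻¹ * (U i)ᴴ) + (L⁻¹ - (1 + L)⁻¹) := by
    unfold Delta; abel
  rw [this]
  exact Matrix.PosDef.posSemidef_add hsmul hdiff
end

section
/- Let L₀ be an N×N Hermitian positive definite complex matrix, and define a sequence of matrices by the Picard iteration L_{k+1} = L_k + L_k Δ(L_k) L_k for k = 0,1,2,…. Then every L_k (k ≥ 0) is Hermitian positive definite. -/
open Matrix
open scoped ComplexOrder

lemma conj_posDef' {N m : ℕ} {A : Matrix (Fin N) (Fin N) ℂ}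
    (hA : A.PosDef) (B : Matrix (Fin N) (Fin m) ℂ)
    (hB : Function.Injective B.mulVec) : (Bᴴ * A * B).PosDef := by
  rw [posDef_iff_dotProduct_mulVec]
  refine ⟨isHermitian_conjTranspose_mul_mul B hA.1, fun x hx => ?_⟩
  have hBx : B *ᵥ x ≠ 0 := (hB.ne_iff' (mulVec_zero B)).2 hx
  simpa only [star_mulVec, dotProduct_mulVec, vecMul_vecMul] using (posDef_iff_dotProduct_mulVec.1 hA).2 hBx

lemma smul_posSemidef {N : ℕ} {c : ℂ} (hc : 0 ≤ c) {A : Matrix (Fin N) (Fin N) ℂ}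
    (hA : A.PosSemidef) : (c • A).PosSemidef := by
  have hcs : star c = c := by
    rw [Complex.nonneg_iff] at hc
    exact Complex.ext (by simp) (by simp [← hc.2])
  rw [posSemidef_iff_dotProduct_mulVec]
  constructor
  · unfold Matrix.IsHermitian
    rw [conjTranspose_smul, hcs, hA.1.eq]
  · intro x
    rw [smul_mulVec, dotProduct_smul, smul_eq_mul]
    exact mul_nonneg hc ((posSemidef_iff_dotProduct_mulVec.1 hA).2 x)

set_option maxHeartbeats 1000000 in
lemma picard_step {N n : ℕ} {k : Fin n → ℕ}
    (U : (i : Fin n) → Matrix (Fin N) (Fin (k i)) ℂ)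
    (hU : ∀ i, (U i)ᴴ * U i = 1)
    {L : Matrix (Fin N) (Fin N) ℂ} (hL : L.PosDef) :
    (L + L * Delta U L * L).PosDef := by
  have hLdet : IsUnit L.det := (isUnit_iff_isUnit_det L).1 hL.isUnit
  have h1L : (1 + L).PosDef := Matrix.PosDef.one.add hL
  have h1Ldet : IsUnit (1 + L).det := (isUnit_iff_isUnit_det _).1 h1L.isUnit
  set S : Matrix (Fin N) (Fin N) ℂ :=
    (n : ℂ)⁻¹ • (∑ i, U i * ((U i)ᴴ * L * U i)⁻¹ * (U i)ᴴ) with hSdef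
  -- S is positive semidefinite
  have hS : S.PosSemidef := by
    apply smul_posSemidef
    · have hcast : ((n : ℕ) : ℂ)⁻¹ = (((n : ℝ)⁻¹ : ℝ) : ℂ) := by
        rw [Complex.ofReal_inv, Complex.ofReal_natCast]
      rw [hcast]
      exact Complex.zero_le_real.2 (inv_nonneg.2 (Nat.cast_nonneg n))
    · apply Finset.sum_induction _ _ (fun a b ha hb => ha.add hb) Matrix.PosSemidef.zero
      intro i _
      have hUi : Function.Injective (U i).mulVec := by
        intro x y hxy
        have := congrArg (fun v => (U i)ᴴ *ᵥ v) hxy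
        simpa [mulVec_mulVec, hU i] using this
      have hMi : ((U i)ᴴ * L * (U i)).PosDef := conj_posDef' hL (U i) hUi
      exact hMi.inv.posSemidef.mul_mul_conjTranspose_same (U i)
  -- the "middle" matrix is positive definite
  have hLinj : Function.Injective L.mulVec :=
    Matrix.mulVec_injective_iff_isUnit.mpr hL.isUnit
  have hQ : (L + L * L).PosDef := by
    have hmid : (L⁻¹ + 1 : Matrix (Fin N) (Fin N) ℂ).PosDef :=
      hL.inv.add Matrix.PosDef.one
    have hid : L + L * L = Lᴴ * (L⁻¹ + 1) * L := by
      rw [hL.1.eq, mul_add, add_mul, mul_nonsing_inv L hLdet, one_mul, mul_one, add_comm]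
    rw [hid]
    exact conj_posDef' hmid L hLinj
  have hM : (S + (L + L * L)⁻¹).PosDef := Matrix.PosDef.posSemidef_add hS hQ.inv
  -- the key algebraic identity
  have hinvrw : (L + L * L)⁻¹ = (1 + L)⁻¹ * L⁻¹ := by
    have : L + L * L = L * (1 + L) := by rw [mul_add, mul_one]
    rw [this, Matrix.mul_inv_rev]
  have e1 : L * ((1 + L)⁻¹ * L⁻¹) * L = L - L * (1 + L)⁻¹ * L := by
    have h1 : L⁻¹ * L = 1 := nonsing_inv_mul L hLdet
    have h2 : (1 + L)⁻¹ * (1 + L) = 1 := nonsing_inv_mul _ h1Ldet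
    have step1 : L * ((1 + L)⁻¹ * L⁻¹) * L = L * (1 + L)⁻¹ := by
      simp only [mul_assoc, h1, mul_one]
    have step2 : L - L * (1 + L)⁻¹ * L = L * (1 + L)⁻¹ := by
      have h3 : L * (1 + L)⁻¹ * (1 + L) = L := by rw [mul_assoc, h2, mul_one]
      have h4 : L * (1 + L)⁻¹ * ((1 + L) - L) = L - L * (1 + L)⁻¹ * L := by
        rw [mul_sub, h3]
      rw [← h4, add_sub_cancel_right, mul_one]
    rw [step1, step2]
  have hid2 : L + L * Delta U L * L = Lᴴ * (S + (L + L * L)⁻¹) * L := by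
    rw [hL.1.eq, Delta, ← hSdef, hinvrw]
    rw [mul_add, add_mul, e1, mul_sub, sub_mul]
    abel
  rw [hid2]
  exact conj_posDef' hM L hLinj

/-- The Picard iterates L_{k+1} = L_k + L_k Δ(L_k) L_k started from a Hermitian
positive definite L₀ are all Hermitian positive definite. -/
theorem picard_iterates_posDef {N n : ℕ} (hN : 0 < N) (hn : 0 < n)
    {k : Fin n → ℕ} (hk1 : ∀ i, 1 ≤ k i) (hkN : ∀ i, k i ≤ N)
    (U : (i : Fin n) → Matrix (Fin N) (Fin (k i)) ℂ)
    (hU : ∀ i, (U i)ᴴ * U i = 1)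
    (L : ℕ → Matrix (Fin N) (Fin N) ℂ)
    (hL0 : (L 0).PosDef)
    (hrec : ∀ m : ℕ, L (m + 1) = L m + L m * Delta U (L m) * L m) :
    ∀ m : ℕ, (L m).PosDef := by
  intro m
  induction m with
  | zero => exact hL0
  | succ m ih => rw [hrec m]; exact picard_step U hU ih
end

section
/- (Lemma 1.) Let N ≥ k ≥ 1 and let U be an N×k complex matrix with U*U = I. Then the real-valued map g(S) = log det(U* S⁻¹ U) is convex on the (convex) set of N×N Hermitian positive definite complex matrices; that is, for all Hermitian positive definite S, T and all t ∈ [0,1], log det(U* (tS + (1−t)T)⁻¹ U) ≤ t·log det(U* S⁻¹ U) + (1−t)·log det(U* T⁻¹ U). (Here U*S⁻¹U is Hermitian positive definite, so its determinant is a positive real.) -/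
open Matrix
open scoped ComplexOrder
open scoped MatrixOrder

variable {n m : ℕ}

/-- conjugation by an injective map preserves positive definiteness -/
lemma aux_posDef_conj {W : Matrix (Fin n) (Fin n) ℂ} (hW : W.PosDef)
    (V : Matrix (Fin n) (Fin m) ℂ) (hV : ∀ x : Fin m → ℂ, x ≠ 0 → V *ᵥ x ≠ 0) :
    (Vᴴ * W * V).PosDef := by
  refine PosDef.of_dotProduct_mulVec_pos (isHermitian_conjTranspose_mul_mul V hW.1) fun x hx => ?_
  simpa only [star_mulVec, dotProduct_mulVec, vecMul_vecMul] using hW.dotProduct_mulVec_pos (hV x hx)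

lemma aux_smul_posSemidef_s3 {A : Matrix (Fin n) (Fin n) ℂ} (hA : A.PosSemidef)
    {c : ℝ} (hc : 0 ≤ c) : ((c : ℂ) • A).PosSemidef := by
  refine PosSemidef.of_dotProduct_mulVec_nonneg ?_ fun x => ?_
  · unfold Matrix.IsHermitian
    rw [conjTranspose_smul, hA.1]
    simp
  · rw [smul_mulVec, dotProduct_smul, smul_eq_mul]
    exact mul_nonneg (by exact_mod_cast hc) (hA.dotProduct_mulVec_nonneg x)

lemma aux_smul_posDef {A : Matrix (Fin n) (Fin n) ℂ} (hA : A.PosDef)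
    {c : ℝ} (hc : 0 < c) : ((c : ℂ) • A).PosDef := by
  refine PosDef.of_dotProduct_mulVec_pos ?_ fun x hx => ?_
  · unfold Matrix.IsHermitian
    rw [conjTranspose_smul, hA.1]
    simp
  · rw [smul_mulVec, dotProduct_smul, smul_eq_mul]
    exact mul_pos (by exact_mod_cast hc) (hA.dotProduct_mulVec_pos hx)

lemma aux_convex_posDef {A B : Matrix (Fin n) (Fin n) ℂ} (hA : A.PosDef) (hB : B.PosDef)
    {t : ℝ} (ht0 : 0 ≤ t) (ht1 : t ≤ 1) :
    ((t : ℂ) • A + ((1 - t : ℝ) : ℂ) • B).PosDef := by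
  rcases eq_or_lt_of_le ht0 with h | h
  · simp only [← h, Complex.ofReal_zero, zero_smul, sub_zero, Complex.ofReal_one, one_smul,
      zero_add]
    exact hB
  · exact (aux_smul_posDef hA h).add_posSemidef (aux_smul_posSemidef_s3 hB.posSemidef (by linarith))

lemma aux_det_smul_one_add_smul {D : Matrix (Fin n) (Fin n) ℂ} (hD : D.IsHermitian) (a b : ℝ) :
    ((a : ℂ) • (1 : Matrix (Fin n) (Fin n) ℂ) + (b : ℂ) • D).det
      = ∏ i, ((a + b * hD.eigenvalues i : ℝ) : ℂ) := by
  have hV : (hD.eigenvectorUnitary : Matrix (Fin n) (Fin n) ℂ)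
      * star (hD.eigenvectorUnitary : Matrix (Fin n) (Fin n) ℂ) = 1 :=
    Matrix.mem_unitaryGroup_iff.mp hD.eigenvectorUnitary.2
  have key : (a : ℂ) • (1 : Matrix (Fin n) (Fin n) ℂ) + (b : ℂ) • D
      = (hD.eigenvectorUnitary : Matrix (Fin n) (Fin n) ℂ)
          * ((a : ℂ) • 1 + (b : ℂ) • diagonal (RCLike.ofReal ∘ hD.eigenvalues))
          * star (hD.eigenvectorUnitary : Matrix (Fin n) (Fin n) ℂ) := by
    rw [Matrix.mul_add, Matrix.add_mul, mul_smul_comm, smul_mul_assoc,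
      mul_smul_comm, smul_mul_assoc, mul_one, hV, ← Unitary.conjStarAlgAut_apply (S := ℂ) hD.eigenvectorUnitary, ← hD.spectral_theorem]
  rw [key, det_mul_right_comm, hV, one_mul]
  have : (a : ℂ) • (1 : Matrix (Fin n) (Fin n) ℂ)
        + (b : ℂ) • diagonal (RCLike.ofReal ∘ hD.eigenvalues)
      = diagonal (fun i => ((a + b * hD.eigenvalues i : ℝ) : ℂ)) := by
    rw [← diagonal_one, ← diagonal_smul, ← diagonal_smul, diagonal_add]
    funext i
    simp
  rw [this, det_diagonal]

lemma aux_det_re {A : Matrix (Fin n) (Fin n) ℂ} (hA : A.PosDef) :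
    ((A.det.re : ℂ) = A.det ∧ 0 < A.det.re) := by
  have h := Complex.lt_def.mp hA.det_pos
  simp only [Complex.zero_re, Complex.zero_im] at h
  exact ⟨Complex.ext (by simp) (by simp [h.2.symm]), h.1⟩

lemma aux_sqrt_facts {A : Matrix (Fin n) (Fin n) ℂ} (hA : A.PosDef) :
    (CFC.sqrt A).IsHermitian ∧ (CFC.sqrt A) * (CFC.sqrt A) = A
      ∧ IsUnit (CFC.sqrt A).det := by
  refine ⟨(Matrix.nonneg_iff_posSemidef.mp (CFC.sqrt_nonneg A)).1, CFC.sqrt_mul_sqrt_self A hA.posSemidef.nonneg, ?_⟩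
  rw [isUnit_iff_ne_zero]
  intro h
  have : A.det = 0 := by
    rw [← CFC.sqrt_mul_sqrt_self A hA.posSemidef.nonneg, det_mul, h, mul_zero]
  exact hA.det_pos.ne' this

lemma aux_conj_sqrt {A B : Matrix (Fin n) (Fin n) ℂ} (hA : A.PosDef) (a b : ℝ) :
    (a : ℂ) • A + (b : ℂ) • B
      = (CFC.sqrt A) *
          ((a : ℂ) • 1 + (b : ℂ) • ((CFC.sqrt A)⁻¹ * B * (CFC.sqrt A)⁻¹))
        * (CFC.sqrt A) := by
  obtain ⟨hCH, hCC, hCd⟩ := aux_sqrt_facts hA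
  set C := (CFC.sqrt A)
  have h1 : C * C⁻¹ = 1 := mul_nonsing_inv _ hCd
  have h2 : C⁻¹ * C = 1 := nonsing_inv_mul _ hCd
  rw [Matrix.mul_add, Matrix.add_mul, mul_smul_comm, smul_mul_assoc, mul_one,
    mul_smul_comm, smul_mul_assoc, hCC]
  congr 2
  symm
  calc C * (C⁻¹ * B * C⁻¹) * C = (C * C⁻¹) * B * (C⁻¹ * C) := by
        simp only [Matrix.mul_assoc]
    _ = B := by rw [h1, h2, Matrix.one_mul, Matrix.mul_one]

/-- determinant monotonicity: if B - A is PSD and A is PD then det A ≤ det B -/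
lemma aux_det_mono {A B : Matrix (Fin n) (Fin n) ℂ} (hA : A.PosDef)
    (hE : (B - A).PosSemidef) : A.det.re ≤ B.det.re := by
  obtain ⟨hCH, hCC, hCd⟩ := aux_sqrt_facts hA
  set C := (CFC.sqrt A) with hC
  set D := C⁻¹ * (B - A) * C⁻¹ with hD
  have hDpsd : D.PosSemidef := by
    have := hE.conjTranspose_mul_mul_same C⁻¹
    rwa [hCH.inv.eq] at this
  have key : B = C * ((1 : ℂ) • 1 + (1 : ℂ) • D) * C := by
    have h := aux_conj_sqrt hA (B := B - A) 1 1
    simp only [Complex.ofReal_one, one_smul] at h ⊢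
    rw [← hC, ← hD] at h
    rw [← h]
    abel
  have hdet : B.det = A.det * ((1 : ℂ) • (1 : Matrix (Fin n) (Fin n) ℂ) + (1 : ℂ) • D).det := by
    rw [key, det_mul, det_mul, mul_comm C.det, mul_assoc, ← det_mul, hCC, mul_comm]
  have hprod : ((1 : ℂ) • (1 : Matrix (Fin n) (Fin n) ℂ) + (1 : ℂ) • D).det
      = ((∏ i, (1 + hDpsd.1.eigenvalues i) : ℝ) : ℂ) := by
    have h := aux_det_smul_one_add_smul hDpsd.1 1 1
    push_cast at h ⊢
    simpa using h
  obtain ⟨hre, hpos⟩ := aux_det_re hA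
  have hBdet : B.det = ((A.det.re * ∏ i, (1 + hDpsd.1.eigenvalues i) : ℝ) : ℂ) := by
    rw [hdet, hprod, ← hre, ← Complex.ofReal_mul, Complex.ofReal_re]
  have hBre : B.det.re = A.det.re * ∏ i, (1 + hDpsd.1.eigenvalues i) := by
    rw [hBdet, Complex.ofReal_re]
  rw [hBre]
  have hone : (1 : ℝ) ≤ ∏ i, (1 + hDpsd.1.eigenvalues i) := by
    calc (1 : ℝ) = ∏ _i : Fin n, 1 := by simp
      _ ≤ ∏ i, (1 + hDpsd.1.eigenvalues i) :=
        Finset.prod_le_prod (fun i _ => zero_le_one)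
          (fun i _ => le_add_of_nonneg_right (hDpsd.eigenvalues_nonneg i))
  nlinarith

lemma aux_det_geom_mean {A B : Matrix (Fin n) (Fin n) ℂ} (hA : A.PosDef) (hB : B.PosDef)
    {t : ℝ} (ht0 : 0 ≤ t) (ht1 : t ≤ 1) :
    A.det.re ^ t * B.det.re ^ (1 - t) ≤ ((t : ℂ) • A + ((1 - t : ℝ) : ℂ) • B).det.re := by
  obtain ⟨hCH, hCC, hCd⟩ := aux_sqrt_facts hA
  set C := (CFC.sqrt A) with hC
  set D := C⁻¹ * B * C⁻¹ with hD
  have h1 : C * C⁻¹ = 1 := mul_nonsing_inv _ hCd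
  have h2 : C⁻¹ * C = 1 := nonsing_inv_mul _ hCd
  have hDpd : D.PosDef := by
    have hinj : ∀ x : Fin n → ℂ, x ≠ 0 → C⁻¹ *ᵥ x ≠ 0 := by
      intro x hx h0
      apply hx
      have hxx : C *ᵥ (C⁻¹ *ᵥ x) = x := by rw [mulVec_mulVec, h1, one_mulVec]
      rw [h0, mulVec_zero] at hxx
      exact hxx.symm
    have := aux_posDef_conj hB C⁻¹ hinj
    rwa [hCH.inv.eq] at this
  set lam := hDpd.1.eigenvalues with hlam
  have hlampos : ∀ i, 0 < lam i := fun i => hDpd.eigenvalues_pos i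
  -- determinant of the convex combination
  have key := aux_conj_sqrt hA (B := B) t (1 - t)
  rw [← hC, ← hD] at key
  have hdet : ((t : ℂ) • A + ((1 - t : ℝ) : ℂ) • B).det
      = A.det * ((t : ℂ) • (1 : Matrix (Fin n) (Fin n) ℂ) + ((1 - t : ℝ) : ℂ) • D).det := by
    rw [key, det_mul, det_mul, mul_comm C.det, mul_assoc, ← det_mul, hCC, mul_comm]
  have hprod : ((t : ℂ) • (1 : Matrix (Fin n) (Fin n) ℂ) + ((1 - t : ℝ) : ℂ) • D).det
      = ((∏ i, (t + (1 - t) * lam i) : ℝ) : ℂ) := by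
    rw [aux_det_smul_one_add_smul hDpd.1 t (1 - t), ← Complex.ofReal_prod]
  -- determinant of B
  have hBconj : B = C * D * C := by
    rw [hD]
    symm
    calc C * (C⁻¹ * B * C⁻¹) * C = (C * C⁻¹) * B * (C⁻¹ * C) := by
          simp only [Matrix.mul_assoc]
      _ = B := by rw [h1, h2, Matrix.one_mul, Matrix.mul_one]
  have hBdet : B.det = A.det * D.det := by
    rw [hBconj, det_mul, det_mul, mul_comm C.det, mul_assoc, ← det_mul, hCC, mul_comm]
  obtain ⟨hre, hpos⟩ := aux_det_re hA
  have hDdet : D.det = ((∏ i, lam i : ℝ) : ℂ) := by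
    rw [hDpd.1.det_eq_prod_eigenvalues]
    norm_cast
  have hBre : B.det.re = A.det.re * ∏ i, lam i := by
    rw [hBdet, hDdet, ← hre, ← Complex.ofReal_mul, Complex.ofReal_re, Complex.ofReal_re]
  have hMre : ((t : ℂ) • A + ((1 - t : ℝ) : ℂ) • B).det.re
      = A.det.re * ∏ i, (t + (1 - t) * lam i) := by
    rw [hdet, hprod, ← hre, ← Complex.ofReal_mul, Complex.ofReal_re, Complex.ofReal_re]
  rw [hBre, hMre]
  set r := A.det.re
  have hprodpos : 0 < ∏ i, lam i := Finset.prod_pos fun i _ => hlampos i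
  have hAM : ∀ i, lam i ^ (1 - t) ≤ t + (1 - t) * lam i := by
    intro i
    have h := Real.geom_mean_le_arith_mean2_weighted ht0 (by linarith : (0:ℝ) ≤ 1 - t)
      zero_le_one (hlampos i).le (by ring)
    simpa using h
  calc r ^ t * (r * ∏ i, lam i) ^ (1 - t)
      = r ^ t * (r ^ (1 - t) * (∏ i, lam i) ^ (1 - t)) := by
        rw [Real.mul_rpow hpos.le hprodpos.le]
    _ = r * (∏ i, lam i) ^ (1 - t) := by
        rw [← mul_assoc, ← Real.rpow_add hpos]
        norm_num
    _ = r * ∏ i, lam i ^ (1 - t) := by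
        rw [Real.finset_prod_rpow _ _ (fun i _ => (hlampos i).le)]
    _ ≤ r * ∏ i, (t + (1 - t) * lam i) := by
        refine mul_le_mul_of_nonneg_left ?_ hpos.le
        exact Finset.prod_le_prod (fun i _ => Real.rpow_nonneg (hlampos i).le _)
          (fun i _ => hAM i)

/-- Cauchy--Schwarz: if Qᴴ Q is PD and Qᴴ P = 1 then Pᴴ P ⪰ (Qᴴ Q)⁻¹. -/
lemma aux_cs {P Q : Matrix (Fin n) (Fin m) ℂ} (hQ : (Qᴴ * Q).PosDef)
    (hQP : Qᴴ * P = 1) : (Pᴴ * P - (Qᴴ * Q)⁻¹).PosSemidef := by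
  set G := (Qᴴ * Q)⁻¹ with hG
  have hGH : G.IsHermitian := hQ.1.inv
  have hd : IsUnit (Qᴴ * Q).det := isUnit_iff_ne_zero.mpr hQ.det_pos.ne'
  have hQQG : (Qᴴ * Q) * G = 1 := mul_nonsing_inv _ hd
  have hPQ : Pᴴ * Q = 1 := by
    have h := congrArg conjTranspose hQP
    simpa [conjTranspose_mul] using h
  have e1 : Pᴴ * (Q * G) = G := by rw [← Matrix.mul_assoc, hPQ, Matrix.one_mul]
  have e2 : (G * Qᴴ) * P = G := by rw [Matrix.mul_assoc, hQP, Matrix.mul_one]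
  have e3 : (G * Qᴴ) * (Q * G) = G := by
    rw [Matrix.mul_assoc, ← Matrix.mul_assoc Qᴴ, hQQG, Matrix.mul_one]
  have hcalc : (P - Q * G)ᴴ * (P - Q * G) = Pᴴ * P - G := by
    rw [conjTranspose_sub, conjTranspose_mul, hGH.eq, Matrix.sub_mul, Matrix.mul_sub,
      Matrix.mul_sub, e1, e2, e3]
    abel
  rw [← hcalc]
  exact posSemidef_conjTranspose_mul_self _

/-- the key Schur-complement bound: Xᴴ S X ⪰ (Uᴴ S⁻¹ U)⁻¹ whenever Uᴴ X = 1. -/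
lemma aux_cs_app {S : Matrix (Fin n) (Fin n) ℂ} (hS : S.PosDef)
    (U X : Matrix (Fin n) (Fin m) ℂ) (hX : Uᴴ * X = 1)
    (hA : (Uᴴ * S⁻¹ * U).PosDef) :
    (Xᴴ * S * X - (Uᴴ * S⁻¹ * U)⁻¹).PosSemidef := by
  obtain ⟨hCH, hCC, hCd⟩ := aux_sqrt_facts hS
  set C := (CFC.sqrt S) with hC
  have h1 : C * C⁻¹ = 1 := mul_nonsing_inv _ hCd
  have h2 : C⁻¹ * C = 1 := nonsing_inv_mul _ hCd
  have hQQ : (C⁻¹ * U)ᴴ * (C⁻¹ * U) = Uᴴ * S⁻¹ * U := by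
    rw [conjTranspose_mul, hCH.inv.eq, ← hCC, Matrix.mul_inv_rev]
    simp only [Matrix.mul_assoc]
  have hPP : (C * X)ᴴ * (C * X) = Xᴴ * S * X := by
    rw [conjTranspose_mul, hCH.eq, ← hCC]
    simp only [Matrix.mul_assoc]
  have hQP : (C⁻¹ * U)ᴴ * (C * X) = 1 := by
    rw [conjTranspose_mul, hCH.inv.eq, Matrix.mul_assoc, ← Matrix.mul_assoc C⁻¹, h2,
      Matrix.one_mul, hX]
  have h := aux_cs (P := C * X) (Q := C⁻¹ * U) (by rw [hQQ]; exact hA) hQP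
  rwa [hQQ, hPP] at h

/-- Lemma 1: for U with orthonormal columns (U*U = I), the map
g(S) = log det(U* S⁻¹ U) is convex on Hermitian positive definite matrices. -/
theorem logdet_compression_inv_convex {N k : ℕ} (hk1 : 1 ≤ k) (hkN : k ≤ N)
    (U : Matrix (Fin N) (Fin k) ℂ) (hU : Uᴴ * U = 1)
    (S T : Matrix (Fin N) (Fin N) ℂ) (hS : S.PosDef) (hT : T.PosDef)
    (t : ℝ) (ht0 : 0 ≤ t) (ht1 : t ≤ 1) :
    Real.log ((Uᴴ * ((t : ℂ) • S + ((1 - t : ℝ) : ℂ) • T)⁻¹ * U).det.re) ≤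
      t * Real.log ((Uᴴ * S⁻¹ * U).det.re) +
        (1 - t) * Real.log ((Uᴴ * T⁻¹ * U).det.re) := by
  set M := (t : ℂ) • S + ((1 - t : ℝ) : ℂ) • T with hMdef
  have hM : M.PosDef := aux_convex_posDef hS hT ht0 ht1
  have hUinj : ∀ x : Fin k → ℂ, x ≠ 0 → U *ᵥ x ≠ 0 := by
    intro x hx h0
    apply hx
    have hxx : Uᴴ *ᵥ (U *ᵥ x) = x := by rw [mulVec_mulVec, hU, one_mulVec]
    rw [h0, mulVec_zero] at hxx
    exact hxx.symm
  have hA : (Uᴴ * S⁻¹ * U).PosDef := aux_posDef_conj hS.inv U hUinj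
  have hB : (Uᴴ * T⁻¹ * U).PosDef := aux_posDef_conj hT.inv U hUinj
  have hG : (Uᴴ * M⁻¹ * U).PosDef := aux_posDef_conj hM.inv U hUinj
  set A := Uᴴ * S⁻¹ * U with hAdef
  set B := Uᴴ * T⁻¹ * U with hBdef
  set G := Uᴴ * M⁻¹ * U with hGdef
  have hGd : IsUnit G.det := isUnit_iff_ne_zero.mpr hG.det_pos.ne'
  have hMd : IsUnit M.det := isUnit_iff_ne_zero.mpr hM.det_pos.ne'
  have hMM : M * M⁻¹ = 1 := mul_nonsing_inv _ hMd
  set X := M⁻¹ * U * G⁻¹ with hXdef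
  have hX : Uᴴ * X = 1 := by
    rw [hXdef, ← Matrix.mul_assoc, ← Matrix.mul_assoc, ← hGdef, mul_nonsing_inv _ hGd]
  -- X ᴴ M X = G⁻¹
  have hXH : Xᴴ = G⁻¹ * (Uᴴ * M⁻¹) := by
    rw [hXdef, conjTranspose_mul, conjTranspose_mul, hM.1.inv.eq, hG.1.inv.eq]
  have h1 : Xᴴ * M * X = G⁻¹ := by
    rw [hXH, hXdef]
    calc G⁻¹ * (Uᴴ * M⁻¹) * M * (M⁻¹ * U * G⁻¹)
        = G⁻¹ * (Uᴴ * ((M⁻¹ * M * M⁻¹) * U * G⁻¹)) := by simp only [Matrix.mul_assoc]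
      _ = G⁻¹ * ((Uᴴ * M⁻¹ * U) * G⁻¹) := by
          rw [nonsing_inv_mul _ hMd, Matrix.one_mul]
          simp only [Matrix.mul_assoc]
      _ = G⁻¹ * (G * G⁻¹) := by rw [← hGdef]
      _ = G⁻¹ := by rw [mul_nonsing_inv _ hGd, Matrix.mul_one]
  -- decompose G⁻¹ as a convex combination
  have h2 : G⁻¹ = (t : ℂ) • (Xᴴ * S * X) + ((1 - t : ℝ) : ℂ) • (Xᴴ * T * X) := by
    rw [← h1, hMdef, Matrix.mul_add, Matrix.add_mul]
    simp only [Matrix.mul_smul, Matrix.smul_mul]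
  have h3 : (Xᴴ * S * X - A⁻¹).PosSemidef := aux_cs_app hS U X hX hA
  have h4 : (Xᴴ * T * X - B⁻¹).PosSemidef := aux_cs_app hT U X hX hB
  set K := (t : ℂ) • A⁻¹ + ((1 - t : ℝ) : ℂ) • B⁻¹ with hKdef
  have hK : K.PosDef := aux_convex_posDef hA.inv hB.inv ht0 ht1
  have h5 : (G⁻¹ - K).PosSemidef := by
    have he : G⁻¹ - K = (t : ℂ) • (Xᴴ * S * X - A⁻¹)
        + ((1 - t : ℝ) : ℂ) • (Xᴴ * T * X - B⁻¹) := by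
      rw [h2, hKdef, smul_sub, smul_sub]
      abel
    rw [he]
    exact (aux_smul_posSemidef_s3 h3 ht0).add (aux_smul_posSemidef_s3 h4 (by linarith))
  -- determinant chain
  have hgm : A⁻¹.det.re ^ t * B⁻¹.det.re ^ (1 - t) ≤ K.det.re :=
    aux_det_geom_mean hA.inv hB.inv ht0 ht1
  have hmono : K.det.re ≤ G⁻¹.det.re := aux_det_mono hK h5
  -- translate inverse determinants
  have hinvre : ∀ {W : Matrix (Fin k) (Fin k) ℂ} (hW : W.PosDef),
      W⁻¹.det.re = (W.det.re)⁻¹ := by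
    intro W hW
    obtain ⟨hre, hpos⟩ := aux_det_re hW
    rw [det_nonsing_inv, Ring.inverse_eq_inv, ← hre, ← Complex.ofReal_inv, Complex.ofReal_re,
      Complex.ofReal_re]
  rw [hinvre hA, hinvre hB] at hgm
  rw [hinvre hG] at hmono
  obtain ⟨-, hposA⟩ := aux_det_re hA
  obtain ⟨-, hposB⟩ := aux_det_re hB
  obtain ⟨-, hposG⟩ := aux_det_re hG
  have hchain : (A.det.re)⁻¹ ^ t * (B.det.re)⁻¹ ^ (1 - t) ≤ (G.det.re)⁻¹ :=
    le_trans hgm hmono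
  have hLpos : 0 < (A.det.re)⁻¹ ^ t * (B.det.re)⁻¹ ^ (1 - t) :=
    mul_pos (Real.rpow_pos_of_pos (by positivity) _) (Real.rpow_pos_of_pos (by positivity) _)
  have hlog := Real.log_le_log hLpos hchain
  rw [Real.log_mul (ne_of_gt (Real.rpow_pos_of_pos (by positivity) _))
      (ne_of_gt (Real.rpow_pos_of_pos (by positivity) _)),
    Real.log_rpow (by positivity), Real.log_rpow (by positivity),
    Real.log_inv, Real.log_inv, Real.log_inv] at hlog
  linarith
end

section
/- Let N ≥ k ≥ 1, let U be an N×k complex matrix with U*U = I, and let X, Y be N×N Hermitian positive definite complex matrices. Then log det( U* ((X+Y)/2)⁻¹ U ) ≤ (1/2)·log det(U* X⁻¹ U) + (1/2)·log det(U* Y⁻¹ U). (Midpoint-convexity inequality used to prove Lemma 1.) -/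
open Matrix
open scoped ComplexOrder

section Aux
variable {m n : Type*} [Fintype m] [Fintype n] [DecidableEq n] [DecidableEq m]

lemma posdef_conj {Q : Matrix m m ℂ} (hQ : Q.PosDef) (W : Matrix m n ℂ)
    (hW : ∀ x : n → ℂ, x ≠ 0 → W *ᵥ x ≠ 0) : (Wᴴ * Q * W).PosDef := by
  refine Matrix.PosDef.of_dotProduct_mulVec_pos ?_ fun x hx => ?_
  · show (Wᴴ * Q * W)ᴴ = _
    rw [conjTranspose_mul, conjTranspose_mul, conjTranspose_conjTranspose, hQ.1.eq]
    exact (Matrix.mul_assoc Wᴴ Q W).symm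
  · have h1 : (Wᴴ * Q * W) *ᵥ x = Wᴴ *ᵥ (Q *ᵥ (W *ᵥ x)) := by
      simp [← mulVec_mulVec]
    rw [h1, dotProduct_mulVec, ← star_mulVec]
    exact hQ.dotProduct_mulVec_pos (hW x hx)

lemma det_smul_one_add_smul (a b : ℝ) {G : Matrix n n ℂ} (hG : G.IsHermitian) :
    det ((a : ℂ) • 1 + (b : ℂ) • G) = ((∏ i, (a + b * hG.eigenvalues i) : ℝ) : ℂ) := by
  set V : Matrix n n ℂ := (hG.eigenvectorUnitary : Matrix n n ℂ) with hVdef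
  have hV1 : V * star V = 1 := Matrix.mem_unitaryGroup_iff.mp hG.eigenvectorUnitary.2
  have hV2 : star V * V = 1 := Matrix.mem_unitaryGroup_iff'.mp hG.eigenvectorUnitary.2
  have key : (a : ℂ) • 1 + (b : ℂ) • G
      = V * ((a : ℂ) • 1 + (b : ℂ) • diagonal (RCLike.ofReal ∘ hG.eigenvalues)) * star V := by
    conv_lhs => rw [hG.spectral_theorem]
    simp only [Matrix.mul_add, Matrix.add_mul, Matrix.mul_smul, Matrix.smul_mul, Matrix.mul_one,
      Unitary.conjStarAlgAut_apply, Unitary.coe_star]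
    rw [hV1]
  rw [key, det_mul, det_mul]
  have hdio : (a : ℂ) • (1 : Matrix n n ℂ) + (b : ℂ) • diagonal (RCLike.ofReal ∘ hG.eigenvalues)
      = diagonal (fun i => (a : ℂ) + b * hG.eigenvalues i) := by
    rw [← diagonal_one, ← diagonal_smul, ← diagonal_smul, diagonal_add]
    funext i
    simp [smul_eq_mul]
  rw [hdio, det_diagonal]
  have hdet : det V * det (star V) = 1 := by rw [← det_mul, hV1, det_one]
  rw [mul_right_comm, hdet, one_mul]
  push_cast
  ring

lemma det_re_pos {A : Matrix n n ℂ} (hA : A.PosDef) :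
    0 < (det A).re ∧ (det A).im = 0 := by
  have := hA.det_pos
  rw [Complex.lt_def] at this
  exact ⟨by simpa using this.1, by simpa using this.2.symm⟩

open scoped MatrixOrder in
lemma det_mono_add_psd {A E : Matrix n n ℂ} (hA : A.PosDef) (hE : E.PosSemidef) :
    (det A).re ≤ (det (A + E)).re := by
  have hs := hA.posSemidef
  set C := CFC.sqrt A with hCdef
  have hC : C.PosSemidef := (CFC.sqrt_nonneg A).posSemidef
  have hCC : C * C = A := CFC.sqrt_mul_sqrt_self A hs.nonneg
  have hdetA : IsUnit A.det := (Matrix.isUnit_iff_isUnit_det _).mp hA.isUnit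
  have hdetC : IsUnit C.det := by
    have : IsUnit (C.det * C.det) := by rw [← det_mul, hCC]; exact hdetA
    exact isUnit_of_mul_isUnit_left this
  have hCi : C * C⁻¹ = 1 := mul_nonsing_inv _ hdetC
  have hiC : C⁻¹ * C = 1 := nonsing_inv_mul _ hdetC
  set F := C⁻¹ * E * C⁻¹ with hFdef
  have hF : F.PosSemidef := by
    have := hE.conjTranspose_mul_mul_same (C⁻¹)
    rwa [hC.1.inv.eq] at this
  have key : A + E = C * (1 + F) * C := by
    have : C * (1 + F) * C = C * C + (C * C⁻¹) * E * (C⁻¹ * C) := by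
      noncomm_ring
      simp [hFdef, Matrix.mul_assoc]
    rw [this, hCC, hCi, hiC, one_mul, mul_one]
  have hdet1F : det (1 + F) = ((∏ i, (1 + 1 * hF.1.eigenvalues i) : ℝ) : ℂ) := by
    have := det_smul_one_add_smul (n := n) 1 1 hF.1
    simpa using this
  have hdets : det (A + E) = det A * ((∏ i, (1 + 1 * hF.1.eigenvalues i) : ℝ) : ℂ) := by
    rw [key, det_mul, det_mul, mul_right_comm, ← det_mul, hCC, hdet1F]
  have hprod : (1 : ℝ) ≤ ∏ i, (1 + 1 * hF.1.eigenvalues i) := by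
    calc (1:ℝ) = ∏ _i : n, (1:ℝ) := by simp
    _ ≤ ∏ i, (1 + 1 * hF.1.eigenvalues i) := by
        refine Finset.prod_le_prod (by simp) fun i _ => ?_
        have := hF.eigenvalues_nonneg i
        linarith
  obtain ⟨hpos, him⟩ := det_re_pos hA
  have : (det (A + E)).re = (det A).re * ∏ i, (1 + 1 * hF.1.eigenvalues i) := by
    rw [hdets, Complex.mul_re, Complex.ofReal_re, Complex.ofReal_im, him]
    ring
  rw [this]
  nlinarith
lemma half_log_le_log_half_add {t : ℝ} (ht : 0 < t) :
    (1/2) * Real.log t ≤ Real.log (1/2 + (1/2) * t) := by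
  have h1 : Real.sqrt t ≤ 1/2 + (1/2) * t := by
    nlinarith [sq_nonneg (Real.sqrt t - 1), Real.sq_sqrt ht.le]
  have h2 : Real.log (Real.sqrt t) ≤ Real.log (1/2 + (1/2)*t) :=
    Real.log_le_log (Real.sqrt_pos.mpr ht) h1
  rw [Real.log_sqrt ht.le] at h2
  linarith

open scoped MatrixOrder in
lemma logdet_midpoint_concave {A B : Matrix n n ℂ} (hA : A.PosDef) (hB : B.PosDef) :
    (1/2) * Real.log (det A).re + (1/2) * Real.log (det B).re
      ≤ Real.log ((det ((2:ℂ)⁻¹ • (A + B))).re) := by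
  have hs := hA.posSemidef
  set C := CFC.sqrt A with hCdef
  have hC : C.PosSemidef := (CFC.sqrt_nonneg A).posSemidef
  have hCC : C * C = A := CFC.sqrt_mul_sqrt_self A hs.nonneg
  have hdetA : IsUnit A.det := (Matrix.isUnit_iff_isUnit_det _).mp hA.isUnit
  have hdetC : IsUnit C.det := by
    have : IsUnit (C.det * C.det) := by rw [← det_mul, hCC]; exact hdetA
    exact isUnit_of_mul_isUnit_left this
  have hCi : C * C⁻¹ = 1 := mul_nonsing_inv _ hdetC
  have hiC : C⁻¹ * C = 1 := nonsing_inv_mul _ hdetC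
  have hinj : ∀ x : n → ℂ, x ≠ 0 → C⁻¹ *ᵥ x ≠ 0 := by
    intro x hx h0
    apply hx
    have hcx : C *ᵥ (C⁻¹ *ᵥ x) = x := by rw [mulVec_mulVec, hCi, one_mulVec]
    rw [h0, mulVec_zero] at hcx; exact hcx.symm
  set G := C⁻¹ * B * C⁻¹ with hGdef
  have hG : G.PosDef := by
    have := posdef_conj hB (C⁻¹) hinj; rwa [hC.1.inv.eq] at this
  have hBdecomp : B = C * G * C := by
    have h2 : C * G * C = (C * C⁻¹) * B * (C⁻¹ * C) := by
      rw [hGdef]; noncomm_ring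
    rw [h2, hCi, hiC, one_mul, mul_one]
  have key : (2:ℂ)⁻¹ • (A + B) = C * (((1/2 : ℝ) : ℂ) • 1 + ((1/2 : ℝ) : ℂ) • G) * C := by
    have h3 : C * (((1/2 : ℝ) : ℂ) • 1 + ((1/2 : ℝ) : ℂ) • G) * C
        = ((1/2 : ℝ) : ℂ) • (C * C) + ((1/2 : ℝ) : ℂ) • (C * G * C) := by
      simp only [Matrix.mul_add, Matrix.add_mul, Matrix.mul_smul, Matrix.smul_mul, Matrix.mul_one]
    rw [h3, hCC, ← hBdecomp, ← smul_add]
    norm_num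
  set μ := hG.1.eigenvalues with hμdef
  have hdetmid : det ((2:ℂ)⁻¹ • (A + B))
      = det A * ((∏ i, (1/2 + (1/2) * μ i) : ℝ) : ℂ) := by
    rw [key, det_mul, det_mul, mul_right_comm, ← det_mul, hCC,
      det_smul_one_add_smul (1/2) (1/2) hG.1]
  have hdetG : det G = ((∏ i, μ i : ℝ) : ℂ) := by
    rw [hG.1.det_eq_prod_eigenvalues]; push_cast; rfl
  have hdetB : det B = det A * ((∏ i, μ i : ℝ) : ℂ) := by
    rw [hBdecomp, det_mul, det_mul, mul_right_comm, ← det_mul, hCC, hdetG]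
  obtain ⟨hapos, haim⟩ := det_re_pos hA
  have hBre : (det B).re = (det A).re * ∏ i, μ i := by
    rw [hdetB, Complex.mul_re, Complex.ofReal_re, Complex.ofReal_im, haim]; ring
  have hmidre : (det ((2:ℂ)⁻¹ • (A + B))).re = (det A).re * ∏ i, (1/2 + (1/2) * μ i) := by
    rw [hdetmid, Complex.mul_re, Complex.ofReal_re, Complex.ofReal_im, haim]; ring
  have hμpos : ∀ i, 0 < μ i := fun i => hG.eigenvalues_pos i
  have hprodpos : 0 < ∏ i, μ i := Finset.prod_pos fun i _ => hμpos i
  have hprod2pos : 0 < ∏ i, (1/2 + (1/2) * μ i) :=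
    Finset.prod_pos fun i _ => by have := hμpos i; linarith
  rw [hBre, hmidre, Real.log_mul hapos.ne' hprodpos.ne',
    Real.log_mul hapos.ne' hprod2pos.ne',
    Real.log_prod (fun i _ => (hμpos i).ne'),
    Real.log_prod (fun i _ => by have := hμpos i; positivity)]
  have hsum : ∑ i, (1/2) * Real.log (μ i) ≤ ∑ i, Real.log (1/2 + (1/2) * μ i) :=
    Finset.sum_le_sum fun i _ => half_log_le_log_half_add (hμpos i)
  have hmul : (1/2 : ℝ) * ∑ i, Real.log (μ i) = ∑ i, (1/2) * Real.log (μ i) :=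
    Finset.mul_sum _ _ _
  linarith

lemma det_inv_re {A : Matrix n n ℂ} (hA : A.PosDef) : (det A⁻¹).re = ((det A).re)⁻¹ := by
  obtain ⟨hpos, him⟩ := det_re_pos hA
  have hre : det A = ((det A).re : ℂ) := Complex.ext rfl (by simp [him])
  rw [det_nonsing_inv, Ring.inverse_eq_inv', hre, ← Complex.ofReal_inv, Complex.ofReal_re]
  simp

lemma posdef_half_add {X Y : Matrix n n ℂ} (hX : X.PosDef) (hY : Y.PosDef) :
    ((2:ℂ)⁻¹ • (X + Y)).PosDef := by
  have hXY := hX.add hY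
  refine Matrix.PosDef.of_dotProduct_mulVec_pos ?_ fun x hx => ?_
  · show ((2:ℂ)⁻¹ • (X + Y))ᴴ = _
    rw [conjTranspose_smul, hXY.1.eq]
    norm_num
  · have h2 : ((2:ℂ)⁻¹ • (X + Y)) *ᵥ x = (2:ℂ)⁻¹ • ((X + Y) *ᵥ x) := smul_mulVec _ _ _
    rw [h2, dotProduct_smul]
    have hq := hXY.dotProduct_mulVec_pos hx
    rw [Complex.lt_def] at hq
    obtain ⟨hre, him⟩ := hq
    have hqq : star x ⬝ᵥ (X + Y) *ᵥ x = ((star x ⬝ᵥ (X + Y) *ᵥ x).re : ℂ) :=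
      Complex.ext rfl (by simpa using him.symm)
    rw [smul_eq_mul, hqq, (by norm_num : (2:ℂ)⁻¹ = ((2⁻¹ : ℝ) : ℂ)), ← Complex.ofReal_mul,
      Complex.zero_lt_real]
    simp only [Complex.zero_re] at hre
    positivity

lemma gap_psd {S : Matrix m m ℂ} (hS : S.PosDef) (U T : Matrix m n ℂ)
    (hUinj : ∀ x : n → ℂ, x ≠ 0 → U *ᵥ x ≠ 0) (hUT : Uᴴ * T = 1) :
    (Tᴴ * S * T - (Uᴴ * S⁻¹ * U)⁻¹).PosSemidef := by
  have hSinv : S⁻¹.PosDef := hS.inv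
  set Q := Uᴴ * S⁻¹ * U with hQdef
  have hQ : Q.PosDef := posdef_conj hSinv U hUinj
  have hdetQ : IsUnit Q.det := (Matrix.isUnit_iff_isUnit_det _).mp hQ.isUnit
  have hQi : Q * Q⁻¹ = 1 := mul_nonsing_inv _ hdetQ
  have hdetS : IsUnit S.det := (Matrix.isUnit_iff_isUnit_det _).mp hS.isUnit
  have hSi : S * S⁻¹ = 1 := mul_nonsing_inv _ hdetS
  have hiS : S⁻¹ * S = 1 := nonsing_inv_mul _ hdetS
  have hTU : Tᴴ * U = 1 := by
    have h := congrArg conjTranspose hUT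
    rwa [conjTranspose_mul, conjTranspose_conjTranspose, conjTranspose_one] at h
  set R := T - S⁻¹ * U * Q⁻¹ with hRdef
  have hRH : Rᴴ = Tᴴ - Q⁻¹ * (Uᴴ * S⁻¹) := by
    rw [hRdef, conjTranspose_sub, conjTranspose_mul, conjTranspose_mul,
      hQ.1.inv.eq, hSinv.1.eq]
  have expand : Rᴴ * S * R = Tᴴ * S * T - Q⁻¹ := by
    rw [hRH, hRdef]
    have e2 : S * (S⁻¹ * (U * Q⁻¹)) = U * Q⁻¹ := by
      rw [← Matrix.mul_assoc, hSi, Matrix.one_mul]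
    have e2' : Tᴴ * (U * Q⁻¹) = Q⁻¹ := by
      rw [← Matrix.mul_assoc, hTU, Matrix.one_mul]
    have e3 : S⁻¹ * (S * T) = T := by
      rw [← Matrix.mul_assoc, hiS, Matrix.one_mul]
    have e3' : Q⁻¹ * (Uᴴ * T) = Q⁻¹ := by rw [hUT, Matrix.mul_one]
    have e4 : Uᴴ * (S⁻¹ * (U * Q⁻¹)) = 1 := by
      rw [← Matrix.mul_assoc, ← Matrix.mul_assoc, ← hQdef, hQi]
    simp only [Matrix.sub_mul, Matrix.mul_sub, Matrix.mul_assoc, e2, e2', e3, e3', e4,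
      Matrix.mul_one]
    abel
  rw [← expand]
  exact hS.posSemidef.conjTranspose_mul_mul_same R
end Aux

/-- Midpoint convexity of S ↦ log det(U* S⁻¹ U) on Hermitian positive definite
matrices, for U with orthonormal columns (U*U = 1). -/
theorem logdet_compression_inv_midpoint_convex {N k : ℕ} (hk1 : 1 ≤ k) (hkN : k ≤ N)
    (U : Matrix (Fin N) (Fin k) ℂ) (hU : Uᴴ * U = 1)
    (X Y : Matrix (Fin N) (Fin N) ℂ) (hX : X.PosDef) (hY : Y.PosDef) :
    Real.log ((Uᴴ * (((2 : ℂ)⁻¹ • (X + Y))⁻¹) * U).det.re) ≤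
      (1 / 2) * Real.log ((Uᴴ * X⁻¹ * U).det.re) +
        (1 / 2) * Real.log ((Uᴴ * Y⁻¹ * U).det.re) := by
  have hUinj : ∀ x : Fin k → ℂ, x ≠ 0 → U *ᵥ x ≠ 0 := by
    intro x hx h0
    apply hx
    have h : Uᴴ *ᵥ (U *ᵥ x) = x := by rw [mulVec_mulVec, hU, one_mulVec]
    rw [h0, mulVec_zero] at h; exact h.symm
  set M := (2:ℂ)⁻¹ • (X + Y) with hMdef
  have hM : M.PosDef := posdef_half_add hX hY
  have hMinv : M⁻¹.PosDef := hM.inv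
  set P := Uᴴ * M⁻¹ * U with hPdef
  have hP : P.PosDef := posdef_conj hMinv U hUinj
  have hdetP : IsUnit P.det := (Matrix.isUnit_iff_isUnit_det _).mp hP.isUnit
  have hPi : P * P⁻¹ = 1 := mul_nonsing_inv _ hdetP
  have hdetM : IsUnit M.det := (Matrix.isUnit_iff_isUnit_det _).mp hM.isUnit
  have hMi : M * M⁻¹ = 1 := mul_nonsing_inv _ hdetM
  set T := M⁻¹ * U * P⁻¹ with hTdef
  have hUT : Uᴴ * T = 1 := by
    rw [hTdef, ← Matrix.mul_assoc, ← Matrix.mul_assoc, ← hPdef, hPi]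
  have hTinj : ∀ x : Fin k → ℂ, x ≠ 0 → T *ᵥ x ≠ 0 := by
    intro x hx h0
    apply hx
    have h : Uᴴ *ᵥ (T *ᵥ x) = x := by rw [mulVec_mulVec, hUT, one_mulVec]
    rw [h0, mulVec_zero] at h; exact h.symm
  have hA' : (Tᴴ * X * T).PosDef := posdef_conj hX T hTinj
  have hB' : (Tᴴ * Y * T).PosDef := posdef_conj hY T hTinj
  have hTH : Tᴴ = P⁻¹ * (Uᴴ * M⁻¹) := by
    rw [hTdef, conjTranspose_mul, conjTranspose_mul, hP.1.inv.eq, hMinv.1.eq]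
  have hTMT : Tᴴ * M * T = P⁻¹ := by
    rw [hTH, hTdef]
    have e1 : M * (M⁻¹ * (U * P⁻¹)) = U * P⁻¹ := by
      rw [← Matrix.mul_assoc, hMi, Matrix.one_mul]
    have e2 : Uᴴ * (M⁻¹ * (U * P⁻¹)) = 1 := by
      rw [← Matrix.mul_assoc, ← Matrix.mul_assoc, ← hPdef, hPi]
    simp only [Matrix.mul_assoc, e1, e2, Matrix.mul_one]
  have hmid : (2:ℂ)⁻¹ • (Tᴴ * X * T + Tᴴ * Y * T) = P⁻¹ := by
    rw [← hTMT, hMdef]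
    simp only [Matrix.mul_smul, Matrix.smul_mul, Matrix.mul_add, Matrix.add_mul]
  have hgapX := gap_psd hX U T hUinj hUT
  have hgapY := gap_psd hY U T hUinj hUT
  have hQX : (Uᴴ * X⁻¹ * U).PosDef := posdef_conj hX.inv U hUinj
  have hQY : (Uᴴ * Y⁻¹ * U).PosDef := posdef_conj hY.inv U hUinj
  have hmonoX : (det (Uᴴ * X⁻¹ * U)⁻¹).re ≤ (det (Tᴴ * X * T)).re := by
    have h := det_mono_add_psd hQX.inv hgapX
    have he : (Uᴴ * X⁻¹ * U)⁻¹ + (Tᴴ * X * T - (Uᴴ * X⁻¹ * U)⁻¹) = Tᴴ * X * T := by abel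
    rwa [he] at h
  have hmonoY : (det (Uᴴ * Y⁻¹ * U)⁻¹).re ≤ (det (Tᴴ * Y * T)).re := by
    have h := det_mono_add_psd hQY.inv hgapY
    have he : (Uᴴ * Y⁻¹ * U)⁻¹ + (Tᴴ * Y * T - (Uᴴ * Y⁻¹ * U)⁻¹) = Tᴴ * Y * T := by abel
    rwa [he] at h
  have hconc := logdet_midpoint_concave hA' hB'
  rw [hmid] at hconc
  -- translate dets to real numbers
  obtain ⟨hpP, _⟩ := det_re_pos hP
  obtain ⟨hpA, _⟩ := det_re_pos hQX
  obtain ⟨hpB, _⟩ := det_re_pos hQY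
  obtain ⟨hpA', _⟩ := det_re_pos hA'
  obtain ⟨hpB', _⟩ := det_re_pos hB'
  rw [det_inv_re hP, Real.log_inv] at hconc
  have hlogX : -Real.log ((Uᴴ * X⁻¹ * U).det.re) ≤ Real.log ((Tᴴ * X * T).det.re) := by
    have hx : ((Uᴴ * X⁻¹ * U).det.re)⁻¹ ≤ (Tᴴ * X * T).det.re := by
      rw [← det_inv_re hQX]; exact hmonoX
    have h := Real.log_le_log (show (0:ℝ) < ((Uᴴ * X⁻¹ * U).det.re)⁻¹ by positivity) hx
    rwa [Real.log_inv] at h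
  have hlogY : -Real.log ((Uᴴ * Y⁻¹ * U).det.re) ≤ Real.log ((Tᴴ * Y * T).det.re) := by
    have hx : ((Uᴴ * Y⁻¹ * U).det.re)⁻¹ ≤ (Tᴴ * Y * T).det.re := by
      rw [← det_inv_re hQY]; exact hmonoY
    have h := Real.log_le_log (show (0:ℝ) < ((Uᴴ * Y⁻¹ * U).det.re)⁻¹ by positivity) hx
    rwa [Real.log_inv] at h
  linarith
end

section
/- (Theorem 1.) Let L₀ be an N×N Hermitian positive definite complex matrix and define the Picard iteration L_{k+1} = L_k + L_k Δ(L_k) L_k for k = 0,1,2,…. Then the sequence of log-likelihood values {φ(L_k)}_{k≥0} is monotonically increasing: φ(L_{k+1}) ≥ φ(L_k) for all k ≥ 0. -/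
open Matrix
open scoped ComplexOrder

/-- The DPP log-likelihood φ(L) = ∑ᵢ log det(Uᵢ*LUᵢ) − n·log det(I+L). -/
noncomputable def phi {N n : ℕ} {k : Fin n → ℕ}
    (U : (i : Fin n) → Matrix (Fin N) (Fin (k i)) ℂ)
    (L : Matrix (Fin N) (Fin N) ℂ) : ℝ :=
  (∑ i, Real.log (((U i)ᴴ * L * U i).det.re)) - n * Real.log ((1 + L).det.re)

namespace PicardAux

variable {N κ : ℕ}

/-- real part of det of a PD complex matrix is positive -/
lemma det_re_pos {A : Matrix (Fin N) (Fin N) ℂ} (hA : A.PosDef) : 0 < A.det.re := by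
  have h := hA.det_pos
  rw [Complex.lt_def] at h
  exact h.1

lemma det_eq_re {A : Matrix (Fin N) (Fin N) ℂ} (hA : A.PosDef) : A.det = (A.det.re : ℂ) := by
  have h := hA.det_pos
  rw [Complex.lt_def] at h
  exact Complex.ext rfl (by simpa using h.2.symm)

/-- determinant real part as product of eigenvalues -/
lemma det_re_eq_prod {A : Matrix (Fin N) (Fin N) ℂ} (hA : A.IsHermitian) :
    A.det.re = ∏ i, hA.eigenvalues i := by
  have : A.det = ((∏ i, hA.eigenvalues i : ℝ) : ℂ) := by
    rw [hA.det_eq_prod_eigenvalues]; norm_cast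
  rw [this, Complex.ofReal_re]

/-- trace real part as sum of eigenvalues -/
lemma trace_re_eq_sum {A : Matrix (Fin N) (Fin N) ℂ} (hA : A.IsHermitian) :
    A.trace.re = ∑ i, hA.eigenvalues i := by
  have h := hA.spectral_theorem
  have : A.trace = ((∑ i, hA.eigenvalues i : ℝ) : ℂ) := by
    conv_lhs => rw [h]
    rw [Unitary.conjStarAlgAut_apply, Matrix.trace_mul_cycle]
    have : (star (hA.eigenvectorUnitary : Matrix (Fin N) (Fin N) ℂ)) *
        (hA.eigenvectorUnitary : Matrix (Fin N) (Fin N) ℂ) = 1 := by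
      exact Unitary.coe_star_mul_self _
    rw [this, Matrix.one_mul, Matrix.trace_diagonal]
    push_cast; rfl
  rw [this, Complex.ofReal_re]

/-- congruence preserves PosDef when the congruence matrix has trivial kernel -/
lemma posDef_conj {A : Matrix (Fin N) (Fin N) ℂ} (hA : A.PosDef)
    (B : Matrix (Fin N) (Fin κ) ℂ) (hB : ∀ x, B *ᵥ x = 0 → x = 0) :
    (Bᴴ * A * B).PosDef := by
  refine Matrix.PosDef.of_dotProduct_mulVec_pos ?_ fun x hx => ?_
  · have := hA.isHermitian
    unfold Matrix.IsHermitian at *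
    simp [Matrix.conjTranspose_mul, Matrix.mul_assoc, this]
  · have hBx : B *ᵥ x ≠ 0 := fun h => hx (hB x h)
    have := hA.dotProduct_mulVec_pos hBx
    convert this using 1
    calc star x ⬝ᵥ (Bᴴ * A * B) *ᵥ x
        = star x ⬝ᵥ Bᴴ *ᵥ (A *ᵥ (B *ᵥ x)) := by
          rw [← Matrix.mulVec_mulVec, ← Matrix.mulVec_mulVec]
      _ = (star x ᵥ* Bᴴ) ⬝ᵥ (A *ᵥ (B *ᵥ x)) := by rw [Matrix.dotProduct_mulVec]
      _ = star (B *ᵥ x) ⬝ᵥ A *ᵥ (B *ᵥ x) := by rw [← Matrix.star_mulVec]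



/-- PSD is preserved by nonneg real scalar multiplication -/
lemma posSemidef_smul {A : Matrix (Fin N) (Fin N) ℂ} (hA : A.PosSemidef) {c : ℝ} (hc : 0 ≤ c) :
    ((c : ℂ) • A).PosSemidef := by
  refine Matrix.PosSemidef.of_dotProduct_mulVec_nonneg ?_ fun x => ?_
  · unfold Matrix.IsHermitian
    rw [Matrix.conjTranspose_smul, hA.1]
    congr 1
    simp [Complex.ext_iff]
  · have h := hA.dotProduct_mulVec_nonneg x
    rw [Matrix.smul_mulVec, dotProduct_smul]
    rw [Complex.le_def] at h ⊢
    simp only [smul_eq_mul, Complex.zero_re, Complex.zero_im, Complex.mul_re, Complex.mul_im,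
      Complex.ofReal_re, Complex.ofReal_im] at h ⊢
    constructor
    · nlinarith [h.1]
    · nlinarith [h.2]

/-- diagonal entries of PSD matrices have nonneg real part -/
lemma posSemidef_diag_re_nonneg {A : Matrix (Fin N) (Fin N) ℂ} (hA : A.PosSemidef) (j : Fin N) :
    0 ≤ (A j j).re := by
  have h := hA.dotProduct_mulVec_nonneg (Pi.single j 1)
  rw [Complex.le_def] at h
  have : star (Pi.single j 1 : Fin N → ℂ) ⬝ᵥ A *ᵥ Pi.single j 1 = A j j := by
    simp [Matrix.mulVec_single, dotProduct, Pi.single_apply]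
  rw [this] at h
  exact h.1

/-- A*B=B*A with B invertible gives A*B⁻¹ = B⁻¹*A -/
lemma commute_nonsing_inv {A B : Matrix (Fin N) (Fin N) ℂ} (h : A * B = B * A)
    (hB : IsUnit B.det) : A * B⁻¹ = B⁻¹ * A := by
  calc A * B⁻¹ = B⁻¹ * B * A * B⁻¹ := by rw [Matrix.nonsing_inv_mul _ hB, Matrix.one_mul]
    _ = B⁻¹ * (B * A) * B⁻¹ := by rw [Matrix.mul_assoc B⁻¹ B A]
    _ = B⁻¹ * (A * B) * B⁻¹ := by rw [h]
    _ = B⁻¹ * A * (B * B⁻¹) := by simp only [Matrix.mul_assoc]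
    _ = B⁻¹ * A := by rw [Matrix.mul_nonsing_inv _ hB, Matrix.mul_one]

/-- log det X ≤ trace X − N for PD X -/
lemma log_det_le_trace {A : Matrix (Fin N) (Fin N) ℂ} (hA : A.PosDef) :
    Real.log A.det.re ≤ A.trace.re - N := by
  rw [det_re_eq_prod hA.isHermitian, trace_re_eq_sum hA.isHermitian]
  have hpos := hA.eigenvalues_pos
  rw [Real.log_prod (fun i _ => (hpos i).ne')]
  calc ∑ i, Real.log (hA.isHermitian.eigenvalues i)
      ≤ ∑ i, (hA.isHermitian.eigenvalues i - 1) :=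
        Finset.sum_le_sum fun i _ => Real.log_le_sub_one_of_pos (hpos i)
    _ = (∑ i, hA.isHermitian.eigenvalues i) - N := by
        rw [Finset.sum_sub_distrib]; simp

/-- the final scalar inequality -/
lemma scalar_ineq {a c : ℝ} (ha : 0 < a) (hc0 : 0 ≤ c) (hc1 : c ≤ 1) :
    (a - 1) * c ≤ Real.log a * (a - 1 + c) := by
  have h1 : Real.log a ≤ a - 1 := Real.log_le_sub_one_of_pos ha
  have h2 : Real.log a⁻¹ ≤ a⁻¹ - 1 := Real.log_le_sub_one_of_pos (by positivity)
  rw [Real.log_inv] at h2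
  have h3 : 1 - a⁻¹ ≤ Real.log a := by linarith
  have h4 : a - 1 ≤ a * Real.log a := by
    have := mul_le_mul_of_nonneg_left h3 ha.le
    rw [mul_sub, mul_inv_cancel₀ ha.ne'] at this
    linarith
  nlinarith [mul_nonneg (mul_nonneg (sub_nonneg.2 hc0) (sub_nonneg.2 hc1)) ha.le]


lemma posSemidef_sum {n : ℕ} (f : Fin n → Matrix (Fin N) (Fin N) ℂ)
    (hf : ∀ i, (f i).PosSemidef) : (∑ i, f i).PosSemidef := by
  classical
  refine Finset.sum_induction f Matrix.PosSemidef (fun a b ha hb => ha.add hb)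
    Matrix.PosSemidef.zero (fun i _ => hf i)


/-- Key compression inequality: `tr((log A)·W Wᴴ) ≤ log det (Wᴴ A W)` in eigen-language. -/
lemma jensen_compression {A : Matrix (Fin N) (Fin N) ℂ} (hA : A.PosDef)
    (W : Matrix (Fin N) (Fin κ) ℂ) (hW : Wᴴ * W = 1) :
    ∑ j, Real.log (hA.isHermitian.eigenvalues j) *
      (((hA.isHermitian.eigenvectorUnitary : Matrix (Fin N) (Fin N) ℂ)ᴴ * (W * Wᴴ) *
        (hA.isHermitian.eigenvectorUnitary : Matrix (Fin N) (Fin N) ℂ)) j j).re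
      ≤ Real.log ((Wᴴ * A * W).det.re) := by
  have hWinj : ∀ x, W *ᵥ x = 0 → x = 0 := by
    intro x hx
    have h1 : (Wᴴ * W) *ᵥ x = 0 := by
      rw [← Matrix.mulVec_mulVec, hx, Matrix.mulVec_zero]
    rwa [hW, Matrix.one_mulVec] at h1
  have hX : (Wᴴ * A * W).PosDef := posDef_conj hA W hWinj
  set E : Matrix (Fin N) (Fin N) ℂ := (hA.isHermitian.eigenvectorUnitary : Matrix (Fin N) (Fin N) ℂ) with hE
  set Q : Matrix (Fin κ) (Fin κ) ℂ := (hX.isHermitian.eigenvectorUnitary : Matrix (Fin κ) (Fin κ) ℂ) with hQ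
  set α := hA.isHermitian.eigenvalues with hα
  set μ := hX.isHermitian.eigenvalues with hμ
  set D : Matrix (Fin N) (Fin N) ℂ := diagonal (fun j => ((α j : ℝ) : ℂ)) with hD
  have hEs : Eᴴ * E = 1 := by
    rw [← Matrix.star_eq_conjTranspose]; exact Unitary.coe_star_mul_self _
  have hEt : E * Eᴴ = 1 := by
    rw [← Matrix.star_eq_conjTranspose]; exact Unitary.coe_mul_star_self _
  have hQs : Qᴴ * Q = 1 := by
    rw [← Matrix.star_eq_conjTranspose]; exact Unitary.coe_star_mul_self _
  have hQt : Q * Qᴴ = 1 := by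
    rw [← Matrix.star_eq_conjTranspose]; exact Unitary.coe_mul_star_self _
  have hdiag : diagonal (RCLike.ofReal ∘ α) = D := rfl
  have hDA : A = E * D * Eᴴ := by
    rw [← hdiag, ← Matrix.star_eq_conjTranspose]; exact hA.isHermitian.spectral_theorem
  have hDX : Qᴴ * (Wᴴ * A * W) * Q = diagonal (fun m => ((μ m : ℝ) : ℂ)) := by
    rw [← Matrix.star_eq_conjTranspose]
    have := hX.isHermitian.conjStarAlgAut_star_eigenvectorUnitary
    simpa [Function.comp_def] using this
  -- right-assoc cancellation helpers
  have hEt' : ∀ {ℓ : ℕ} (X : Matrix (Fin N) (Fin ℓ) ℂ), E * (Eᴴ * X) = X := by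
    intro ℓ X; rw [← Matrix.mul_assoc, hEt, Matrix.one_mul]
  have hW' : ∀ {ℓ : ℕ} (X : Matrix (Fin κ) (Fin ℓ) ℂ), Wᴴ * (W * X) = X := by
    intro ℓ X; rw [← Matrix.mul_assoc, hW, Matrix.one_mul]
  have hQt' : ∀ {ℓ : ℕ} (X : Matrix (Fin κ) (Fin ℓ) ℂ), Q * (Qᴴ * X) = X := by
    intro ℓ X; rw [← Matrix.mul_assoc, hQt, Matrix.one_mul]
  set B : Matrix (Fin N) (Fin κ) ℂ := Eᴴ * W * Q with hB
  set c : Fin N → Fin κ → ℝ := fun j m => Complex.normSq (B j m) with hc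
  have hBH : Bᴴ = Qᴴ * (Wᴴ * E) := by
    simp only [hB, Matrix.conjTranspose_mul, Matrix.conjTranspose_conjTranspose, Matrix.mul_assoc]
  have entry_star : ∀ (j : Fin N) (m : Fin κ), Bᴴ m j = star (B j m) :=
    fun j m => Matrix.conjTranspose_apply _ _ _
  have hnormSq : ∀ (j : Fin N) (m : Fin κ), star (B j m) * B j m = ((c j m : ℝ) : ℂ) := by
    intro j m
    rw [hc, Complex.normSq_eq_conj_mul_self]; rfl
  -- (1) columns of B are unit vectors
  have hBB : Bᴴ * B = 1 := by
    calc Bᴴ * B = Qᴴ * (Wᴴ * (E * (Eᴴ * (W * Q)))) := by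
          simp only [hB, Matrix.conjTranspose_mul, Matrix.conjTranspose_conjTranspose,
            Matrix.mul_assoc]
      _ = 1 := by rw [hEt', hW', hQs]
  have hcol : ∀ m, ∑ j, c j m = 1 := by
    intro m
    have h1 : (Bᴴ * B) m m = 1 := by rw [hBB]; simp
    rw [Matrix.mul_apply] at h1
    rw [Finset.sum_congr rfl (fun j _ => by rw [entry_star j m, hnormSq j m])] at h1
    have : ((∑ j, c j m : ℝ) : ℂ) = 1 := by push_cast at h1 ⊢; exact h1
    exact_mod_cast this
  -- (2) eigenvalues of the compression as convex combinations
  have hmix : ∀ m, μ m = ∑ j, c j m * α j := by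
    intro m
    have h1 : Bᴴ * (D * B) = diagonal (fun m => ((μ m : ℝ) : ℂ)) := by
      calc Bᴴ * (D * B) = Qᴴ * (Wᴴ * ((E * (D * (Eᴴ * (W * Q)))))) := by
            simp only [hB, Matrix.conjTranspose_mul, Matrix.conjTranspose_conjTranspose,
              Matrix.mul_assoc]
        _ = Qᴴ * (Wᴴ * A * W) * Q := by
            rw [hDA]; simp only [Matrix.mul_assoc]
        _ = diagonal (fun m => ((μ m : ℝ) : ℂ)) := hDX
    have h2 := congrArg (fun M => M m m) h1
    rw [Matrix.mul_apply] at h2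
    have h3 : ∀ j : Fin N, Bᴴ m j * (D * B) j m = ((c j m * α j : ℝ) : ℂ) := by
      intro j
      rw [entry_star j m, hD, Matrix.diagonal_mul]
      push_cast
      calc star (B j m) * ((α j : ℂ) * B j m) = (star (B j m) * B j m) * (α j : ℂ) := by ring
        _ = ((c j m : ℝ) : ℂ) * (α j : ℂ) := by rw [hnormSq j m]
    rw [Finset.sum_congr rfl (fun j _ => h3 j), Matrix.diagonal_apply_eq] at h2
    have h4 : ((∑ j, c j m * α j : ℝ) : ℂ) = ((μ m : ℝ) : ℂ) := by push_cast at h2 ⊢; exact h2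
    exact_mod_cast h4.symm
  -- (3) row sums of c give the diagonal of the compressed projection
  have hrow : ∀ j, ((Eᴴ * (W * Wᴴ) * E) j j).re = ∑ m, c j m := by
    intro j
    have h1 : Eᴴ * (W * Wᴴ) * E = B * Bᴴ := by
      calc Eᴴ * (W * Wᴴ) * E = Eᴴ * (W * (Q * (Qᴴ * (Wᴴ * E)))) := by
            rw [hQt']; simp only [Matrix.mul_assoc]
        _ = B * Bᴴ := by
            simp only [hB, Matrix.conjTranspose_mul, Matrix.conjTranspose_conjTranspose,
              Matrix.mul_assoc]
    rw [h1, Matrix.mul_apply]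
    have h2 : ∀ m, B j m * Bᴴ m j = ((c j m : ℝ) : ℂ) := by
      intro m
      rw [entry_star j m, mul_comm, hnormSq j m]
    rw [Finset.sum_congr rfl (fun m _ => h2 m)]
    push_cast
    simp
  -- (4) Jensen, and assembly
  have hαpos : ∀ j, 0 < α j := hA.eigenvalues_pos
  have hμpos : ∀ m, 0 < μ m := hX.eigenvalues_pos
  have hjensen : ∀ m, ∑ j, c j m * Real.log (α j) ≤ Real.log (μ m) := by
    intro m
    have hconc := (strictConcaveOn_log_Ioi.concaveOn).le_map_sum
      (t := Finset.univ) (w := fun j => c j m) (p := fun j => α j)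
      (fun j _ => Complex.normSq_nonneg _) (hcol m)
      (fun j _ => Set.mem_Ioi.2 (hαpos j))
    simp only [smul_eq_mul] at hconc
    rw [hmix m]
    exact hconc
  calc ∑ j, Real.log (α j) * ((Eᴴ * (W * Wᴴ) * E) j j).re
      = ∑ j, ∑ m, c j m * Real.log (α j) := by
        refine Finset.sum_congr rfl fun j _ => ?_
        rw [hrow j, Finset.mul_sum]
        exact Finset.sum_congr rfl fun m _ => mul_comm _ _
    _ = ∑ m, ∑ j, c j m * Real.log (α j) := Finset.sum_comm
    _ ≤ ∑ m, Real.log (μ m) := Finset.sum_le_sum fun m _ => hjensen m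
    _ = Real.log (∏ m, μ m) := (Real.log_prod fun m _ => (hμpos m).ne').symm
    _ = Real.log ((Wᴴ * A * W).det.re) := by rw [det_re_eq_prod hX.isHermitian]


section Step
variable {n : ℕ} {k : Fin n → ℕ} {U : (i : Fin n) → Matrix (Fin N) (Fin (k i)) ℂ}
  {L : Matrix (Fin N) (Fin N) ℂ}

variable {n : ℕ} {k : Fin n → ℕ} {U : (i : Fin n) → Matrix (Fin N) (Fin (k i)) ℂ}
  {L : Matrix (Fin N) (Fin N) ℂ}

open scoped MatrixOrder in
lemma step (hU : ∀ i, (U i)ᴴ * U i = 1) (hn : 0 < n) (hL : L.PosDef) :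
    (L + L * Delta U L * L).PosDef ∧ phi U L ≤ phi U (L + L * Delta U L * L) := by
  classical
  -- basic data
  set R := CFC.sqrt L with hRdef
  have hRH : Rᴴ = R := (Matrix.nonneg_iff_posSemidef.mp (CFC.sqrt_nonneg L)).isHermitian
  have hRR : R * R = L := CFC.sqrt_mul_sqrt_self L hL.posSemidef.nonneg
  have hLdet : L.det ≠ 0 := hL.det_pos.ne'
  have hRdet : IsUnit R.det := by
    rw [← hRR, Matrix.det_mul] at hLdet
    exact isUnit_iff_ne_zero.2 (by intro h; rw [h] at hLdet; simp at hLdet)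
  have hRinj : ∀ x, R *ᵥ x = 0 → x = 0 := by
    intro x hx
    have := congrArg (fun v => R⁻¹ *ᵥ v) hx
    simpa [Matrix.mulVec_mulVec, Matrix.nonsing_inv_mul _ hRdet] using this
  have hUinj : ∀ i, ∀ x, (U i) *ᵥ x = 0 → x = 0 := by
    intro i x hx
    have h1 : ((U i)ᴴ * U i) *ᵥ x = 0 := by
      rw [← Matrix.mulVec_mulVec, hx, Matrix.mulVec_zero]
    rwa [hU i, Matrix.one_mulVec] at h1
  have hP : (1 + L).PosDef := Matrix.PosDef.one.add_posSemidef hL.posSemidef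
  have hPdet : IsUnit (1 + L).det := isUnit_iff_ne_zero.2 hP.det_pos.ne'
  -- the observed submatrices
  set M : (i : Fin n) → Matrix (Fin (k i)) (Fin (k i)) ℂ :=
    fun i => (U i)ᴴ * L * U i with hMdef
  have hM : ∀ i, (M i).PosDef := fun i => posDef_conj hL (U i) (hUinj i)
  -- the averaged PSD matrix
  set Ssum := ∑ i, U i * (M i)⁻¹ * (U i)ᴴ with hSsumdef
  have hSsum : Ssum.PosSemidef := posSemidef_sum _ fun i =>
    ((hM i).inv.posSemidef).mul_mul_conjTranspose_same (U i)
  set S := (n : ℂ)⁻¹ • Ssum with hSdef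
  have hS : S.PosSemidef := by
    have := posSemidef_smul hSsum (c := (n : ℝ)⁻¹) (by positivity)
    have hcast : (((n : ℝ)⁻¹ : ℝ) : ℂ) = (n : ℂ)⁻¹ := by push_cast; ring
    rwa [hcast] at this
  have hDelta : Delta U L = S - (1 + L)⁻¹ := rfl
  -- ξ, C, P̄
  set ξ := R * Delta U L * R with hxidef
  set C := R * (1 + L)⁻¹ * R with hCdef
  set Pb := R * S * R with hPbdef
  have hCpsd : C.PosSemidef := by
    have := (hP.inv.posSemidef).conjTranspose_mul_mul_same R
    rwa [hRH] at this
  have hPbpsd : Pb.PosSemidef := by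
    have := hS.conjTranspose_mul_mul_same R
    rwa [hRH] at this
  have hxi : ξ = Pb - C := by
    rw [hxidef, hDelta, hPbdef, hCdef]
    noncomm_ring
  -- commutation facts
  have hcomm1 : R * (1 + L) = (1 + L) * R := by
    have : R * L = L * R := by rw [← hRR, ← Matrix.mul_assoc, Matrix.mul_assoc]
    rw [Matrix.mul_add, Matrix.add_mul, Matrix.mul_one, Matrix.one_mul, this]
  have hcomm : R * (1 + L)⁻¹ = (1 + L)⁻¹ * R := commute_nonsing_inv hcomm1 hPdet
  have hone_sub_C : 1 - C = (1 + L)⁻¹ := by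
    have hC2 : C = (1 + L)⁻¹ * L := by
      rw [hCdef, hcomm, Matrix.mul_assoc, hRR]
    rw [hC2]
    have h5 : (1 : Matrix (Fin N) (Fin N) ℂ) - (1 + L)⁻¹ * L
        = (1 + L)⁻¹ * (1 + L) - (1 + L)⁻¹ * L := by
      rw [Matrix.nonsing_inv_mul _ hPdet]
    rw [h5, ← Matrix.mul_sub, add_sub_cancel_right, Matrix.mul_one]
  -- A := 1 + ξ is positive definite
  set A := (1 : Matrix (Fin N) (Fin N) ℂ) + ξ with hAdef
  have hA : A.PosDef := by
    have h1 : A = (1 + L)⁻¹ + Pb := by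
      rw [hAdef, hxi, ← hone_sub_C]; abel
    rw [h1]
    exact hP.inv.add_posSemidef hPbpsd
  have hAH := hA.isHermitian
  set E : Matrix (Fin N) (Fin N) ℂ := (hAH.eigenvectorUnitary : Matrix (Fin N) (Fin N) ℂ) with hEdef
  set α := hAH.eigenvalues with hαdef
  have hαpos : ∀ j, 0 < α j := hA.eigenvalues_pos
  have hEs : Eᴴ * E = 1 := by
    rw [← Matrix.star_eq_conjTranspose]; exact Unitary.coe_star_mul_self _
  have hEt : E * Eᴴ = 1 := by
    rw [← Matrix.star_eq_conjTranspose]; exact Unitary.coe_mul_star_self _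
  have hEdiag : Eᴴ * A * E = diagonal (fun j => ((α j : ℝ) : ℂ)) := by
    rw [← Matrix.star_eq_conjTranspose]
    have := hAH.conjStarAlgAut_star_eigenvectorUnitary
    simpa [Function.comp_def] using this
  -- L' = R * A * R
  set L' := L + L * Delta U L * L with hL'def
  have hL'eq : L' = R * A * R := by
    rw [hL'def, hAdef, hxidef, ← hRR]
    noncomm_ring
  have hL' : L'.PosDef := by
    have h6 := posDef_conj hA R hRinj
    rw [hRH] at h6
    rwa [← hL'eq] at h6
  have hP' : (1 + L').PosDef := Matrix.PosDef.one.add_posSemidef hL'.posSemidef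
  -- the per-sample objects
  set M' : (i : Fin n) → Matrix (Fin (k i)) (Fin (k i)) ℂ :=
    fun i => (U i)ᴴ * L' * U i with hM'def
  have hM' : ∀ i, (M' i).PosDef := fun i => posDef_conj hL' (U i) (hUinj i)
  -- c and p diagonals
  set c : Fin N → ℝ := fun j => ((Eᴴ * C * E) j j).re with hcdef
  have hc0 : ∀ j, 0 ≤ c j := by
    intro j
    have h1 : (Eᴴ * C * E).PosSemidef := hCpsd.conjTranspose_mul_mul_same E
    exact posSemidef_diag_re_nonneg h1 j
  have hc1 : ∀ j, c j ≤ 1 := by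
    intro j
    have h1 : (Eᴴ * (1 - C) * E).PosSemidef := by
      rw [hone_sub_C]; exact hP.inv.posSemidef.conjTranspose_mul_mul_same E
    have h2 := posSemidef_diag_re_nonneg h1 j
    have h3 : Eᴴ * (1 - C) * E = 1 - Eᴴ * C * E := by
      rw [Matrix.mul_sub, Matrix.sub_mul, Matrix.mul_one, hEs]
    rw [h3] at h2
    have h4 : ((1 - Eᴴ * C * E) j j).re = 1 - c j := by
      simp [Matrix.sub_apply, Matrix.one_apply, hcdef]
    rw [h4] at h2
    linarith
  have hpj : ∀ j, ((Eᴴ * Pb * E) j j).re = α j - 1 + c j := by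
    intro j
    have h1 : Pb = A - 1 + C := by rw [hAdef, hxi]; abel
    have h2 : Eᴴ * Pb * E = diagonal (fun j => ((α j : ℝ) : ℂ)) - 1 + Eᴴ * C * E := by
      have h2' : Eᴴ * Pb * E = Eᴴ * A * E - Eᴴ * E + Eᴴ * C * E := by
        rw [h1]; noncomm_ring
      rw [h2', hEdiag, hEs]
    rw [h2]
    simp [Matrix.sub_apply, Matrix.add_apply, Matrix.one_apply, hcdef]

  -- per-sample whitened isometries
  set V : (i : Fin n) → Matrix (Fin N) (Fin (k i)) ℂ := fun i => R * U i with hVdef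
  set sq : (i : Fin n) → Matrix (Fin (k i)) (Fin (k i)) ℂ :=
    fun i => CFC.sqrt (M i) with hsqdef
  have hsqH : ∀ i, (sq i)ᴴ = sq i := fun i =>
    (Matrix.nonneg_iff_posSemidef.mp (CFC.sqrt_nonneg (M i))).isHermitian
  have hsqsq : ∀ i, sq i * sq i = M i := fun i =>
    CFC.sqrt_mul_sqrt_self (M i) (hM i).posSemidef.nonneg
  have hsqdet : ∀ i, IsUnit (sq i).det := by
    intro i
    have h1 : (M i).det ≠ 0 := (hM i).det_pos.ne'
    rw [← hsqsq i, Matrix.det_mul] at h1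
    exact isUnit_iff_ne_zero.2 fun h => h1 (by rw [h, zero_mul])
  have hsqinvH : ∀ i, ((sq i)⁻¹)ᴴ = (sq i)⁻¹ := by
    intro i; rw [Matrix.conjTranspose_nonsing_inv, hsqH]
  have hsqinv2 : ∀ i, (sq i)⁻¹ * (sq i)⁻¹ = (M i)⁻¹ := by
    intro i; rw [← Matrix.mul_inv_rev, hsqsq i]
  set W : (i : Fin n) → Matrix (Fin N) (Fin (k i)) ℂ := fun i => V i * (sq i)⁻¹ with hWdef
  have hRR' : ∀ {ℓ : ℕ} (X : Matrix (Fin N) (Fin ℓ) ℂ), R * (R * X) = L * X := by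
    intro ℓ X; rw [← Matrix.mul_assoc, hRR]
  have hWH : ∀ i, (W i)ᴴ = (sq i)⁻¹ * ((U i)ᴴ * R) := by
    intro i
    simp only [hWdef, hVdef, Matrix.conjTranspose_mul, hsqinvH, hRH, Matrix.mul_assoc]
  have hWW : ∀ i, (W i)ᴴ * W i = 1 := by
    intro i
    calc (W i)ᴴ * W i
        = (sq i)⁻¹ * ((U i)ᴴ * (R * (R * (U i * (sq i)⁻¹)))) := by
          rw [hWH i, hWdef, hVdef]; simp only [Matrix.mul_assoc]
      _ = (sq i)⁻¹ * (M i * (sq i)⁻¹) := by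
          rw [hRR' (U i * (sq i)⁻¹), hMdef]; simp only [Matrix.mul_assoc]
      _ = ((sq i)⁻¹ * sq i) * (sq i * (sq i)⁻¹) := by
          rw [← hsqsq i]; simp only [Matrix.mul_assoc]
      _ = 1 := by
          rw [Matrix.nonsing_inv_mul _ (hsqdet i), Matrix.mul_nonsing_inv _ (hsqdet i),
            Matrix.one_mul]
  have hWinj : ∀ i, ∀ x, (W i) *ᵥ x = 0 → x = 0 := by
    intro i x hx
    have h1 : ((W i)ᴴ * W i) *ᵥ x = 0 := by
      rw [← Matrix.mulVec_mulVec, hx, Matrix.mulVec_zero]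
    rwa [hWW i, Matrix.one_mulVec] at h1
  -- sum of the projections
  have hWiWiH : ∀ i, W i * (W i)ᴴ = R * (U i * (M i)⁻¹ * (U i)ᴴ) * R := by
    intro i
    calc W i * (W i)ᴴ
        = R * (U i * (((sq i)⁻¹ * (sq i)⁻¹) * ((U i)ᴴ * R))) := by
          rw [hWdef, hWH i, hVdef]; simp only [Matrix.mul_assoc]
      _ = R * (U i * (M i)⁻¹ * (U i)ᴴ) * R := by
          rw [hsqinv2 i]; simp only [Matrix.mul_assoc]
  have hncast : (n : ℂ) ≠ 0 := Nat.cast_ne_zero.2 hn.ne'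
  have hsumW : ∑ i, W i * (W i)ᴴ = (n : ℂ) • Pb := by
    calc ∑ i, W i * (W i)ᴴ = ∑ i, R * (U i * (M i)⁻¹ * (U i)ᴴ) * R :=
          Finset.sum_congr rfl fun i _ => hWiWiH i
      _ = R * Ssum * R := by rw [hSsumdef, Matrix.mul_sum, Matrix.sum_mul]
      _ = (n : ℂ) • Pb := by
          rw [hPbdef, hSdef, Matrix.mul_smul, Matrix.smul_mul, smul_smul,
            mul_inv_cancel₀ hncast, one_smul]
  -- per-sample determinant identity
  have hXpd : ∀ i, ((W i)ᴴ * A * W i).PosDef := fun i => posDef_conj hA (W i) (hWinj i)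
  have hVAV : ∀ i, (U i)ᴴ * (R * (A * (R * U i))) = M' i := by
    intro i
    rw [hM'def, hL'eq]; simp only [Matrix.mul_assoc]
  have hdet_i : ∀ i, Real.log (((W i)ᴴ * A * W i).det.re)
      = Real.log ((M' i).det.re) - Real.log ((M i).det.re) := by
    intro i
    have e1 : (W i)ᴴ * A * W i = (sq i)⁻¹ * (M' i * (sq i)⁻¹) := by
      calc (W i)ᴴ * A * W i
          = (sq i)⁻¹ * (((U i)ᴴ * (R * (A * (R * (U i))))) * (sq i)⁻¹) := by
            rw [hWH i, hWdef, hVdef]; simp only [Matrix.mul_assoc]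
        _ = (sq i)⁻¹ * (M' i * (sq i)⁻¹) := by rw [hVAV i]
    have hdets : ((W i)ᴴ * A * W i).det * (M i).det = (M' i).det := by
      rw [e1, ← hsqsq i]
      simp only [Matrix.det_mul, Matrix.det_nonsing_inv]
      have hd : (sq i).det ≠ 0 := by
        intro h; exact (isUnit_iff_ne_zero.1 (hsqdet i)) h
      rw [Ring.inverse_eq_inv]
      field_simp
    rw [det_eq_re (hXpd i), det_eq_re (hM i), det_eq_re (hM' i), ← Complex.ofReal_mul] at hdets
    have hreal : ((W i)ᴴ * A * W i).det.re * (M i).det.re = (M' i).det.re :=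
      Complex.ofReal_inj.1 hdets
    rw [← hreal, Real.log_mul (det_re_pos (hXpd i)).ne' (det_re_pos (hM i)).ne']
    ring
  -- apply the compression inequality for each sample
  have hkey1 : ∀ i, ∑ j, Real.log (α j) * ((Eᴴ * (W i * (W i)ᴴ) * E) j j).re
      ≤ Real.log ((M' i).det.re) - Real.log ((M i).det.re) := by
    intro i
    rw [← hdet_i i]
    exact jensen_compression hA (W i) (hWW i)
  -- row sums
  have hsum1 : ∀ j, ∑ i, ((Eᴴ * (W i * (W i)ᴴ) * E) j j).re = n * (α j - 1 + c j) := by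
    intro j
    have h9 : ∑ i, Eᴴ * (W i * (W i)ᴴ) * E = (n : ℂ) • (Eᴴ * Pb * E) := by
      calc ∑ i, Eᴴ * (W i * (W i)ᴴ) * E
          = Eᴴ * (∑ i, W i * (W i)ᴴ) * E := by rw [Matrix.mul_sum, Matrix.sum_mul]
        _ = (n : ℂ) • (Eᴴ * Pb * E) := by
            rw [hsumW, Matrix.mul_smul, Matrix.smul_mul]
    have h10 := congrArg (fun X : Matrix (Fin N) (Fin N) ℂ => (X j j).re) h9
    simp only [Matrix.sum_apply, Matrix.smul_apply, smul_eq_mul] at h10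
    rw [Complex.re_sum] at h10
    rw [h10, ← hpj j]
    simp [Complex.mul_re]
  -- the trace helper
  have trace_mul_diag : ∀ (X : Matrix (Fin N) (Fin N) ℂ) (d : Fin N → ℝ),
      (X * diagonal (fun j => ((d j : ℝ) : ℂ))).trace = ∑ j, X j j * ((d j : ℝ) : ℂ) := by
    intro X d
    rw [Matrix.trace]
    refine Finset.sum_congr rfl fun j _ => ?_
    rw [Matrix.diag_apply, Matrix.mul_apply]
    rw [Finset.sum_eq_single j]
    · rw [Matrix.diagonal_apply_eq]
    · intro b _ hbj; rw [Matrix.diagonal_apply_ne _ hbj, mul_zero]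
    · intro h; exact absurd (Finset.mem_univ j) h
  -- spectral decomposition of A
  have hDA : A = E * diagonal (fun j => ((α j : ℝ) : ℂ)) * Eᴴ := by
    rw [← Matrix.star_eq_conjTranspose]
    exact hAH.spectral_theorem
  -- denominator bound
  have hkey2 : Real.log ((1 + L').det.re) - Real.log ((1 + L).det.re)
      ≤ ∑ j, (α j - 1) * c j := by
    set sqP := CFC.sqrt (1 + L) with hsqPdef
    have hsqPH : sqPᴴ = sqP := (Matrix.nonneg_iff_posSemidef.mp (CFC.sqrt_nonneg (1 + L))).isHermitian
    have hsqPsq : sqP * sqP = 1 + L := CFC.sqrt_mul_sqrt_self (1 + L) hP.posSemidef.nonneg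
    have hsqPdet : IsUnit sqP.det := by
      have h1 : (1 + L).det ≠ 0 := hP.det_pos.ne'
      rw [← hsqPsq, Matrix.det_mul] at h1
      exact isUnit_iff_ne_zero.2 fun h => h1 (by rw [h, zero_mul])
    have hsqPinvH : (sqP⁻¹)ᴴ = sqP⁻¹ := by
      rw [Matrix.conjTranspose_nonsing_inv, hsqPH]
    have hsqPinv2 : sqP⁻¹ * sqP⁻¹ = (1 + L)⁻¹ := by
      rw [← Matrix.mul_inv_rev, hsqPsq]
    have hsqPinj : ∀ x, sqP⁻¹ *ᵥ x = 0 → x = 0 := by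
      intro x hx
      have := congrArg (fun v => sqP *ᵥ v) hx
      simpa [Matrix.mulVec_mulVec, Matrix.mul_nonsing_inv _ hsqPdet] using this
    set G := sqP⁻¹ * (1 + L') * sqP⁻¹ with hGdef
    have hG : G.PosDef := by
      have h1 := posDef_conj hP' (sqP⁻¹) hsqPinj
      rwa [hsqPinvH] at h1
    -- determinant of G
    have hdetsG : G.det * (1 + L).det = (1 + L').det := by
      rw [hGdef, ← hsqPsq]
      simp only [Matrix.det_mul, Matrix.det_nonsing_inv]
      have hd : sqP.det ≠ 0 := fun h => (isUnit_iff_ne_zero.1 hsqPdet) h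
      rw [Ring.inverse_eq_inv]
      field_simp
    rw [det_eq_re hG, det_eq_re hP, det_eq_re hP', ← Complex.ofReal_mul] at hdetsG
    have hrealG : G.det.re * (1 + L).det.re = (1 + L').det.re := Complex.ofReal_inj.1 hdetsG
    have hlogG : Real.log (G.det.re) = Real.log ((1 + L').det.re) - Real.log ((1 + L).det.re) := by
      rw [← hrealG, Real.log_mul (det_re_pos hG).ne' (det_re_pos hP).ne']
      ring
    -- trace of G
    have h8 : (1 : Matrix (Fin N) (Fin N) ℂ) + L' = (1 + L) + R * ξ * R := by
      rw [hL'eq, hAdef, ← hRR]; noncomm_ring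
    have htraceG : G.trace = (N : ℂ) + (C * ξ).trace := by
      calc G.trace = (sqP⁻¹ * (sqP⁻¹ * (1 + L'))).trace := by
            rw [hGdef, Matrix.trace_mul_cycle]
            simp only [Matrix.mul_assoc]
        _ = ((1 + L)⁻¹ * (1 + L')).trace := by
            rw [← Matrix.mul_assoc, hsqPinv2]
        _ = ((1 + L)⁻¹ * (1 + L) + (1 + L)⁻¹ * (R * ξ * R)).trace := by
            rw [h8, Matrix.mul_add]
        _ = (N : ℂ) + ((1 + L)⁻¹ * (R * ξ * R)).trace := by
            rw [Matrix.trace_add, Matrix.nonsing_inv_mul _ hPdet, Matrix.trace_one]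
            simp
        _ = (N : ℂ) + (C * ξ).trace := by
            congr 1
            calc ((1 + L)⁻¹ * (R * ξ * R)).trace
                = (((1 + L)⁻¹ * R) * (ξ * R)).trace := by simp only [Matrix.mul_assoc]
              _ = ((ξ * R) * ((1 + L)⁻¹ * R)).trace := Matrix.trace_mul_comm _ _
              _ = (ξ * (R * ((1 + L)⁻¹ * R))).trace := by simp only [Matrix.mul_assoc]
              _ = ((R * ((1 + L)⁻¹ * R)) * ξ).trace := Matrix.trace_mul_comm _ _
              _ = (C * ξ).trace := by rw [hCdef]; simp only [Matrix.mul_assoc]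
    -- trace of C ξ in eigen-coordinates
    have hξA : ξ = A - 1 := by rw [hAdef]; abel
    have htrCE : C.trace = (Eᴴ * C * E).trace := by
      calc C.trace = (C * (E * Eᴴ)).trace := by rw [hEt, Matrix.mul_one]
        _ = ((C * E) * Eᴴ).trace := by simp only [Matrix.mul_assoc]
        _ = (Eᴴ * (C * E)).trace := Matrix.trace_mul_comm _ _
        _ = (Eᴴ * C * E).trace := by simp only [Matrix.mul_assoc]
    have htrCA : (C * A).trace = ((Eᴴ * C * E) * diagonal (fun j => ((α j : ℝ) : ℂ))).trace := by
      calc (C * A).trace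
          = ((C * E * diagonal (fun j => ((α j : ℝ) : ℂ))) * Eᴴ).trace := by
            rw [hDA]; simp only [Matrix.mul_assoc]
        _ = (Eᴴ * (C * E * diagonal (fun j => ((α j : ℝ) : ℂ)))).trace :=
            Matrix.trace_mul_comm _ _
        _ = ((Eᴴ * C * E) * diagonal (fun j => ((α j : ℝ) : ℂ))).trace := by
            simp only [Matrix.mul_assoc]
    have htraceCξ : (C * ξ).trace.re = ∑ j, (α j - 1) * c j := by
      rw [hξA, Matrix.mul_sub, Matrix.mul_one, Matrix.trace_sub]
      rw [Complex.sub_re]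
      rw [htrCA, htrCE, trace_mul_diag]
      rw [Matrix.trace]
      rw [Complex.re_sum, Complex.re_sum]
      rw [← Finset.sum_sub_distrib]
      refine Finset.sum_congr rfl fun j _ => ?_
      rw [Matrix.diag_apply]
      simp only [Complex.mul_re, Complex.ofReal_re, Complex.ofReal_im, mul_zero, sub_zero]
      rw [hcdef]
      ring
    -- combine
    have hbound := log_det_le_trace hG
    rw [hlogG, htraceG] at hbound
    simp only [Complex.add_re, Complex.natCast_re] at hbound
    rw [htraceCξ] at hbound
    linarith
  -- final assembly
  have hphi : phi U L' - phi U L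
      = (∑ i, (Real.log ((M' i).det.re) - Real.log ((M i).det.re)))
        - n * (Real.log ((1 + L').det.re) - Real.log ((1 + L).det.re)) := by
    simp only [phi, hM'def, hMdef]
    rw [Finset.sum_sub_distrib]
    ring
  have hstep1 : ∑ j, Real.log (α j) * (n * (α j - 1 + c j))
      ≤ ∑ i, (Real.log ((M' i).det.re) - Real.log ((M i).det.re)) := by
    have h11 : ∑ i, ∑ j, Real.log (α j) * ((Eᴴ * (W i * (W i)ᴴ) * E) j j).re
        ≤ ∑ i, (Real.log ((M' i).det.re) - Real.log ((M i).det.re)) :=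
      Finset.sum_le_sum fun i _ => hkey1 i
    calc ∑ j, Real.log (α j) * (n * (α j - 1 + c j))
        = ∑ j, ∑ i, Real.log (α j) * ((Eᴴ * (W i * (W i)ᴴ) * E) j j).re := by
          refine Finset.sum_congr rfl fun j _ => ?_
          rw [← Finset.mul_sum, hsum1 j]
      _ = ∑ i, ∑ j, Real.log (α j) * ((Eᴴ * (W i * (W i)ᴴ) * E) j j).re := Finset.sum_comm
      _ ≤ _ := h11
  have hscal : ∑ j, (n : ℝ) * ((α j - 1) * c j) ≤ ∑ j, Real.log (α j) * (n * (α j - 1 + c j)) := by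
    refine Finset.sum_le_sum fun j _ => ?_
    have := scalar_ineq (hαpos j) (hc0 j) (hc1 j)
    calc (n : ℝ) * ((α j - 1) * c j) ≤ (n : ℝ) * (Real.log (α j) * (α j - 1 + c j)) :=
          mul_le_mul_of_nonneg_left this (Nat.cast_nonneg n)
      _ = Real.log (α j) * (n * (α j - 1 + c j)) := by ring
  have hineq : 0 ≤ phi U L' - phi U L := by
    rw [hphi]
    have h12 : (n : ℝ) * (Real.log ((1 + L').det.re) - Real.log ((1 + L).det.re))
        ≤ (n : ℝ) * (∑ j, (α j - 1) * c j) :=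
      mul_le_mul_of_nonneg_left hkey2 (Nat.cast_nonneg n)
    have h13 : (n : ℝ) * (∑ j, (α j - 1) * c j) = ∑ j, (n : ℝ) * ((α j - 1) * c j) := by
      rw [Finset.mul_sum]
    linarith [hstep1, hscal]
  exact ⟨hL', by linarith [hineq]⟩

end Step
end PicardAux

/-- Theorem 1: along the Picard iteration L_{k+1} = L_k + L_k Δ(L_k) L_k started at a
Hermitian positive definite L₀, the log-likelihood φ is monotonically increasing. -/
theorem picard_loglik_monotone {N n : ℕ} (hN : 0 < N) (hn : 0 < n)
    {k : Fin n → ℕ} (hk1 : ∀ i, 1 ≤ k i) (hkN : ∀ i, k i ≤ N)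
    (U : (i : Fin n) → Matrix (Fin N) (Fin (k i)) ℂ)
    (hU : ∀ i, (U i)ᴴ * U i = 1)
    (L : ℕ → Matrix (Fin N) (Fin N) ℂ)
    (hL0 : (L 0).PosDef)
    (hrec : ∀ m : ℕ, L (m + 1) = L m + L m * Delta U (L m) * L m) :
    ∀ m : ℕ, phi U (L m) ≤ phi U (L (m + 1)) := by
  have hPD : ∀ m : ℕ, (L m).PosDef := by
    intro m
    induction m with
    | zero => exact hL0
    | succ m ih =>
      rw [hrec m]
      exact (PicardAux.step hU hn ih).1
  intro m
  have h := (PicardAux.step hU hn (hPD m)).2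
  rwa [← hrec m] at h
end

section
/- Let L be an N×N Hermitian positive definite complex matrix and set L' = L + L Δ(L) L. Then φ(L') ≥ φ(L). (Single-step ascent underlying Theorem 1.) -/
open Matrix
open scoped ComplexOrder

section PortSqrt
open scoped MatrixOrder
variable {m : Type*} [Fintype m] [DecidableEq m]

noncomputable def Matrix.PosSemidef.sqrt {A : Matrix m m ℂ} (_hA : A.PosSemidef) :
    Matrix m m ℂ := CFC.sqrt A

lemma Matrix.PosSemidef.posSemidef_sqrt {A : Matrix m m ℂ} (hA : A.PosSemidef) :
    hA.sqrt.PosSemidef := (CFC.sqrt_nonneg A).posSemidef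

lemma Matrix.PosSemidef.sqrt_mul_self {A : Matrix m m ℂ} (hA : A.PosSemidef) :
    hA.sqrt * hA.sqrt = A := CFC.sqrt_mul_sqrt_self A hA.nonneg

lemma Matrix.posSemidef_iff_eq_transpose_mul_self {A : Matrix m m ℂ} :
    A.PosSemidef ↔ ∃ B : Matrix m m ℂ, A = Bᴴ * B :=
  ⟨fun h => ⟨h.sqrt, by rw [h.posSemidef_sqrt.isHermitian.eq, h.sqrt_mul_self]⟩,
    by rintro ⟨B, rfl⟩; exact posSemidef_conjTranspose_mul_self B⟩

end PortSqrt

section PicardAux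
variable {m l : Type*} [Fintype m] [Fintype l] [DecidableEq m] [DecidableEq l]

lemma trace_re_nonneg {A : Matrix m m ℂ} (hA : A.PosSemidef) : 0 ≤ A.trace.re := by
  obtain ⟨B, rfl⟩ := posSemidef_iff_eq_transpose_mul_self.mp hA
  rw [Matrix.trace, Complex.re_sum]
  refine Finset.sum_nonneg fun j _ => ?_
  rw [Matrix.diag_apply, Matrix.mul_apply, Complex.re_sum]
  refine Finset.sum_nonneg fun i _ => ?_
  rw [Matrix.conjTranspose_apply, Complex.star_def, ← Complex.normSq_eq_conj_mul_self,
    Complex.ofReal_re]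
  exact Complex.normSq_nonneg _

lemma trace_re_mono {A B : Matrix m m ℂ} (h : (B - A).PosSemidef) :
    A.trace.re ≤ B.trace.re := by
  have := trace_re_nonneg h
  rw [Matrix.trace_sub, Complex.sub_re] at this
  linarith

lemma trace_re_mul_nonneg {A B : Matrix m m ℂ} (hA : A.PosSemidef) (hB : B.PosSemidef) :
    0 ≤ (A * B).trace.re := by
  have h1 : A * B = hA.sqrt * (hA.sqrt * B) := by
    rw [← mul_assoc, hA.sqrt_mul_self]
  rw [h1, Matrix.trace_mul_comm]
  have h2 : hA.sqrt * B * hA.sqrt = (hA.sqrt)ᴴ * B * hA.sqrt := by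
    rw [hA.posSemidef_sqrt.isHermitian.eq]
  exact trace_re_nonneg (h2 ▸ hB.conjTranspose_mul_mul_same hA.sqrt)
section PicardAux
variable {m l : Type*} [Fintype m] [Fintype l] [DecidableEq m] [DecidableEq l]

/-- Positive definiteness of `Vᴴ A V` for `A` PD and `V` with injective `mulVec`. -/
lemma posDef_conj_rect {A : Matrix m m ℂ} (hA : A.PosDef) (V : Matrix m l ℂ)
    (hV : ∀ x : l → ℂ, V *ᵥ x = 0 → x = 0) : (Vᴴ * A * V).PosDef := by
  refine posDef_iff_dotProduct_mulVec.mpr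
    ⟨isHermitian_conjTranspose_mul_mul V hA.isHermitian, fun x hx => ?_⟩
  have := hA.dotProduct_mulVec_pos (x := V *ᵥ x) (fun h => hx (hV x h))
  simpa only [star_mulVec, dotProduct_mulVec, vecMul_vecMul] using this

lemma mulVec_inj_of_conj {V : Matrix m l ℂ} (hV : Vᴴ * V = 1) :
    ∀ x : l → ℂ, V *ᵥ x = 0 → x = 0 := by
  intro x h
  have : (Vᴴ * V) *ᵥ x = 0 := by rw [← mulVec_mulVec, h, mulVec_zero]
  rwa [hV, one_mulVec] at this

lemma posDef_of_posSemidef_detne {A : Matrix m m ℂ} (hA : A.PosSemidef)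
    (h : A.det ≠ 0) : A.PosDef := by
  refine posDef_iff_dotProduct_mulVec.mpr ⟨hA.isHermitian, fun x hx => ?_⟩
  rcases lt_or_eq_of_le (hA.dotProduct_mulVec_nonneg x) with h1 | h1
  · exact h1
  · exfalso
    have h2 : A *ᵥ x = 0 := (hA.dotProduct_mulVec_zero_iff x).mp h1.symm
    have h3 : Function.Injective (A.mulVec) :=
      Matrix.mulVec_injective_iff_isUnit.mpr (isUnit_iff_isUnit_det _ |>.mpr h.isUnit)
    exact hx (h3 (by simpa using h2))

lemma det_ne_zero {A : Matrix m m ℂ} (hA : A.PosDef) : A.det ≠ 0 := hA.det_pos.ne'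

/-- the PSD square root of a positive definite matrix is positive definite -/
lemma sqrt_posDef {A : Matrix m m ℂ} (hA : A.PosDef) : (hA.posSemidef.sqrt).PosDef := by
  refine posDef_of_posSemidef_detne hA.posSemidef.posSemidef_sqrt (fun h => ?_)
  apply det_ne_zero hA
  rw [← hA.posSemidef.sqrt_mul_self, Matrix.det_mul, h, zero_mul]

/-- if S = sqrt (A⁻¹) then S * A * S = 1 -/
lemma sqrt_inv_conj {A : Matrix m m ℂ} (hA : A.PosDef) :
    (hA.inv.posSemidef.sqrt) * A * (hA.inv.posSemidef.sqrt) = 1 := by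
  set S := hA.inv.posSemidef.sqrt with hS
  have hSdet : S.det ≠ 0 := det_ne_zero (sqrt_posDef hA.inv)
  have hSS : S * S = A⁻¹ := hA.inv.posSemidef.sqrt_mul_self
  have hAeq : A = S⁻¹ * S⁻¹ := by
    rw [← Matrix.mul_inv_rev, hSS, Matrix.nonsing_inv_nonsing_inv _ (det_ne_zero hA).isUnit]
  calc S * A * S = (S * S⁻¹) * (S⁻¹ * S) := by rw [hAeq]; noncomm_ring
    _ = 1 := by
        rw [Matrix.mul_nonsing_inv _ hSdet.isUnit, Matrix.nonsing_inv_mul _ hSdet.isUnit, one_mul]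

lemma posSemidef_sum {ι : Type*} (s : Finset ι) (F : ι → Matrix m m ℂ)
    (h : ∀ i ∈ s, (F i).PosSemidef) : (∑ i ∈ s, F i).PosSemidef := by
  classical
  induction s using Finset.induction_on with
  | empty => simpa using Matrix.PosSemidef.zero
  | @insert a s hni ih =>
      rw [Finset.sum_insert hni]
      exact (h _ (Finset.mem_insert_self _ _)).add
        (ih fun i hi => h i (Finset.mem_insert_of_mem hi))

lemma posSemidef_real_smul {A : Matrix m m ℂ} (hA : A.PosSemidef) {c : ℝ} (hc : 0 ≤ c) :
    ((c : ℂ) • A).PosSemidef := by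
  refine posSemidef_iff_dotProduct_mulVec.mpr ⟨?_, ?_⟩
  · rw [Matrix.IsHermitian, Matrix.conjTranspose_smul, hA.isHermitian.eq]
    norm_num
  · intro x
    rw [smul_mulVec, dotProduct_smul]
    rcases Complex.nonneg_iff.mp (hA.dotProduct_mulVec_nonneg x) with ⟨h1, h2⟩
    rw [Complex.nonneg_iff]
    constructor
    · rw [smul_eq_mul, Complex.mul_re, Complex.ofReal_re, Complex.ofReal_im, zero_mul, sub_zero]
      exact mul_nonneg hc h1
    · rw [smul_eq_mul, Complex.mul_im, Complex.ofReal_re, Complex.ofReal_im, zero_mul, add_zero,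
        ← h2, mul_zero]

end PicardAux

section PicardAux2
variable {m : Type*} [Fintype m] [DecidableEq m]

lemma det_re_pos_s6 {A : Matrix m m ℂ} (hA : A.PosDef) : 0 < A.det.re :=
  (Complex.pos_iff.mp hA.det_pos).1

lemma det_eq_ofReal_re {A : Matrix m m ℂ} (hA : A.PosDef) : A.det = (A.det.re : ℂ) := by
  rcases Complex.pos_iff.mp hA.det_pos with ⟨h1, h2⟩
  exact Complex.ext (by simp) (by simp [← h2])

lemma trace_eq_sum_eigenvalues {A : Matrix m m ℂ} (hA : A.IsHermitian) :
    A.trace = ((∑ i, hA.eigenvalues i : ℝ) : ℂ) := by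
  have hu : (star (hA.eigenvectorUnitary : Matrix m m ℂ)) * (hA.eigenvectorUnitary : Matrix m m ℂ)
      = 1 := (Unitary.mem_iff.mp (hA.eigenvectorUnitary).2).1
  nth_rewrite 1 [hA.spectral_theorem]
  rw [Unitary.conjStarAlgAut_apply]
  rw [Matrix.trace_mul_comm, ← mul_assoc, hu, one_mul, Matrix.trace_diagonal]
  push_cast
  rfl

lemma inv_spectral {A : Matrix m m ℂ} (hA : A.PosDef) :
    A⁻¹ = (hA.1.eigenvectorUnitary : Matrix m m ℂ) *
      Matrix.diagonal (fun i => ((hA.1.eigenvalues i : ℂ))⁻¹) *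
      (star (hA.1.eigenvectorUnitary : Matrix m m ℂ)) := by
  set V : Matrix m m ℂ := (hA.1.eigenvectorUnitary : Matrix m m ℂ) with hV
  set D : Matrix m m ℂ := Matrix.diagonal (RCLike.ofReal ∘ hA.1.eigenvalues) with hD
  set D' : Matrix m m ℂ := Matrix.diagonal (fun i => ((hA.1.eigenvalues i : ℂ))⁻¹) with hD'
  have hu : star V * V = 1 := (Unitary.mem_iff.mp (hA.1.eigenvectorUnitary).2).1
  have hu' : V * star V = 1 := (Unitary.mem_iff.mp (hA.1.eigenvectorUnitary).2).2
  have hDD' : D * D' = 1 := by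
    rw [hD, hD', Matrix.diagonal_mul_diagonal]
    have h1 : (fun i => (RCLike.ofReal ∘ hA.1.eigenvalues) i *
        ((hA.1.eigenvalues i : ℂ))⁻¹) = fun _ => (1 : ℂ) := by
      funext i
      have h2 : ((hA.1.eigenvalues i : ℂ)) ≠ 0 :=
        Complex.ofReal_ne_zero.mpr (hA.eigenvalues_pos i).ne'
      simpa using mul_inv_cancel₀ h2
    rw [h1, Matrix.diagonal_one]
  apply Matrix.inv_eq_right_inv
  nth_rewrite 1 [hA.1.spectral_theorem]
  rw [Unitary.conjStarAlgAut_apply]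
  have assoc1 : (V * D * star V) * (V * D' * star V) = V * (D * (star V * V) * D') * star V := by
    noncomm_ring
  rw [assoc1, hu, mul_one, hDD', mul_one, hu']

lemma trace_inv_eq {A : Matrix m m ℂ} (hA : A.PosDef) :
    (A⁻¹).trace = ((∑ i, (hA.1.eigenvalues i)⁻¹ : ℝ) : ℂ) := by
  have hu : (star (hA.1.eigenvectorUnitary : Matrix m m ℂ)) *
      (hA.1.eigenvectorUnitary : Matrix m m ℂ) = 1 :=
    (Unitary.mem_iff.mp (hA.1.eigenvectorUnitary).2).1
  rw [inv_spectral hA, Matrix.trace_mul_comm, ← mul_assoc, hu, one_mul, Matrix.trace_diagonal]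
  push_cast
  rfl

lemma det_re_eq_prod {A : Matrix m m ℂ} (hA : A.PosDef) :
    A.det.re = ∏ i, hA.1.eigenvalues i := by
  rw [hA.1.det_eq_prod_eigenvalues]
  norm_cast

lemma log_det_le_trace_sub_card {A : Matrix m m ℂ} (hA : A.PosDef) :
    Real.log A.det.re ≤ A.trace.re - Fintype.card m := by
  rw [det_re_eq_prod hA, trace_eq_sum_eigenvalues hA.1, Complex.ofReal_re,
    Real.log_prod (fun i _ => (hA.eigenvalues_pos i).ne')]
  calc ∑ i, Real.log (hA.1.eigenvalues i)
      ≤ ∑ i, (hA.1.eigenvalues i - 1) :=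
        Finset.sum_le_sum fun i _ => Real.log_le_sub_one_of_pos (hA.eigenvalues_pos i)
    _ = (∑ i, hA.1.eigenvalues i) - Fintype.card m := by
        rw [Finset.sum_sub_distrib, Finset.sum_const, Finset.card_univ]
        simp

lemma card_sub_trace_inv_le_log_det {A : Matrix m m ℂ} (hA : A.PosDef) :
    (Fintype.card m : ℝ) - (A⁻¹).trace.re ≤ Real.log A.det.re := by
  rw [det_re_eq_prod hA, trace_inv_eq hA, Complex.ofReal_re,
    Real.log_prod (fun i _ => (hA.eigenvalues_pos i).ne')]
  have h : ∀ i ∈ Finset.univ (α := m),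
      1 - (hA.1.eigenvalues i)⁻¹ ≤ Real.log (hA.1.eigenvalues i) := by
    intro i _
    have h1 := Real.log_le_sub_one_of_pos (inv_pos.mpr (hA.eigenvalues_pos i))
    rw [Real.log_inv] at h1
    linarith
  calc (Fintype.card m : ℝ) - ∑ i, (hA.1.eigenvalues i)⁻¹
      = ∑ i, (1 - (hA.1.eigenvalues i)⁻¹) := by
        rw [Finset.sum_sub_distrib, Finset.sum_const, Finset.card_univ]
        simp
    _ ≤ ∑ i, Real.log (hA.1.eigenvalues i) := Finset.sum_le_sum h

end PicardAux2

section PicardAux3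
variable {m l : Type*} [Fintype m] [Fintype l] [DecidableEq m] [DecidableEq l]

lemma one_sub_idem_psd {P : Matrix m m ℂ} (hP : P.IsHermitian) (hP2 : P * P = P) :
    ((1 : Matrix m m ℂ) - P).PosSemidef := by
  have h : ((1 : Matrix m m ℂ) - P)ᴴ * (1 - P) = 1 - P := by
    rw [conjTranspose_sub, conjTranspose_one, hP.eq]
    have h2 : ((1 : Matrix m m ℂ) - P) * (1 - P) = 1 - P - P + P * P := by noncomm_ring
    rw [h2, hP2]
    abel
  exact h ▸ posSemidef_conjTranspose_mul_self _

lemma choi_inv {B : Matrix m m ℂ} (hB : B.PosDef) (V : Matrix m l ℂ) (hV : Vᴴ * V = 1) :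
    (Vᴴ * B⁻¹ * V - (Vᴴ * B * V)⁻¹).PosSemidef := by
  have hBdet : B.det ≠ 0 := hB.det_pos.ne'
  set W : Matrix m m ℂ := hB.posSemidef.sqrt with hWdef
  have hWps : W.PosSemidef := hB.posSemidef.posSemidef_sqrt
  have hWH : Wᴴ = W := hWps.isHermitian.eq
  have hWW : W * W = B := hB.posSemidef.sqrt_mul_self
  have hWpd : W.PosDef := by
    refine posDef_of_posSemidef_detne hWps fun h => hBdet ?_
    rw [← hWW, Matrix.det_mul, h, zero_mul]
  have hWdet : W.det ≠ 0 := hWpd.det_pos.ne'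
  set Y : Matrix l l ℂ := Vᴴ * B * V with hYdef
  have hYpd : Y.PosDef := posDef_conj_rect hB V (mulVec_inj_of_conj hV)
  have hYdet : Y.det ≠ 0 := hYpd.det_pos.ne'
  set Q : Matrix m m ℂ := W * V * Y⁻¹ * Vᴴ * W with hQdef
  have hQH : Q.IsHermitian := by
    have h1 : Q = (Vᴴ * W)ᴴ * Y⁻¹ * (Vᴴ * W) := by
      rw [conjTranspose_mul, hWH, conjTranspose_conjTranspose, hQdef]
      simp only [Matrix.mul_assoc]
    rw [h1]
    exact isHermitian_conjTranspose_mul_mul _ hYpd.isHermitian.inv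
  have hQ2 : Q * Q = Q := by
    have h1 : Q * Q = W * V * (Y⁻¹ * (Vᴴ * (W * W) * V) * Y⁻¹) * Vᴴ * W := by
      rw [hQdef]; simp only [Matrix.mul_assoc]
    rw [h1, hWW, ← hYdef, Matrix.nonsing_inv_mul _ hYdet.isUnit, one_mul]
  have hpsd1 : ((1 : Matrix m m ℂ) - Q).PosSemidef := one_sub_idem_psd hQH hQ2
  have hpsd2 : ((W⁻¹)ᴴ * ((1 : Matrix m m ℂ) - Q) * W⁻¹).PosSemidef :=
    hpsd1.conjTranspose_mul_mul_same W⁻¹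
  have hWinvH : (W⁻¹)ᴴ = W⁻¹ := hWps.isHermitian.inv.eq
  have heq1 : (W⁻¹)ᴴ * ((1 : Matrix m m ℂ) - Q) * W⁻¹ = B⁻¹ - V * Y⁻¹ * Vᴴ := by
    rw [hWinvH, mul_sub, sub_mul, mul_one]
    have h1 : W⁻¹ * W⁻¹ = B⁻¹ := by rw [← Matrix.mul_inv_rev, hWW]
    have h2 : W⁻¹ * Q * W⁻¹ = (W⁻¹ * W) * (V * Y⁻¹ * Vᴴ) * (W * W⁻¹) := by
      rw [hQdef]; simp only [Matrix.mul_assoc]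
    rw [h2, Matrix.nonsing_inv_mul _ hWdet.isUnit, Matrix.mul_nonsing_inv _ hWdet.isUnit,
      one_mul, mul_one, h1]
  rw [heq1] at hpsd2
  have hpsd3 := hpsd2.conjTranspose_mul_mul_same V
  have heq2 : Vᴴ * (B⁻¹ - V * Y⁻¹ * Vᴴ) * V = Vᴴ * B⁻¹ * V - Y⁻¹ := by
    rw [Matrix.mul_sub, Matrix.sub_mul]
    congr 1
    have h3 : Vᴴ * (V * Y⁻¹ * Vᴴ) * V = (Vᴴ * V) * Y⁻¹ * (Vᴴ * V) := by
      simp only [Matrix.mul_assoc]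
    rw [h3, hV, one_mul, mul_one]
  rw [heq2] at hpsd3
  exact hpsd3

end PicardAux3

section A5
variable {m l : Type*} [Fintype m] [Fintype l] [DecidableEq m] [DecidableEq l]

lemma posDef_mulVec_inj {A : Matrix m m ℂ} (hA : A.PosDef) :
    ∀ x : m → ℂ, A *ᵥ x = 0 → x = 0 := by
  intro x hx
  have h3 : Function.Injective (A.mulVec) :=
    Matrix.mulVec_injective_iff_isUnit.mpr (isUnit_iff_isUnit_det _ |>.mpr (det_ne_zero hA).isUnit)
  exact h3 (by simpa using hx)

lemma posDef_conj_herm {A C : Matrix m m ℂ} (hA : A.PosDef) (hC : C.PosDef) (hCH : Cᴴ = C) :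
    (C * A * C).PosDef := by
  have := posDef_conj_rect hA C (posDef_mulVec_inj hC)
  rwa [hCH] at this

lemma det_re_mul {A B C : Matrix m m ℂ} (hA : A.PosDef) (hC : C.PosDef)
    (h : B.det = A.det * C.det) : B.det.re = A.det.re * C.det.re := by
  rw [det_eq_ofReal_re hA, det_eq_ofReal_re hC, ← Complex.ofReal_mul] at h
  rw [h, Complex.ofReal_re]

lemma log_det_conj_sqrt {A B : Matrix m m ℂ} (hA : A.PosDef) (hB : B.PosDef) :
    Real.log B.det.re = Real.log A.det.re +
      Real.log ((hA.inv.posSemidef.sqrt * B * hA.inv.posSemidef.sqrt).det.re) := by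
  set S := hA.inv.posSemidef.sqrt with hS
  have hSpd : S.PosDef := sqrt_posDef hA.inv
  have hSH : Sᴴ = S := hSpd.isHermitian.eq
  have hCpd : (S * B * S).PosDef := posDef_conj_herm hB hSpd hSH
  have h2 : S.det * S.det = (A.det)⁻¹ := by
    rw [← Matrix.det_mul, hA.inv.posSemidef.sqrt_mul_self, Matrix.det_nonsing_inv,
      Ring.inverse_eq_inv']
  have hdet : B.det = A.det * (S * B * S).det := by
    have h1 : (S * B * S).det = S.det * B.det * S.det := by
      rw [Matrix.det_mul, Matrix.det_mul]
    have h3 : S.det * B.det * S.det = (A.det)⁻¹ * B.det := by rw [← h2]; ring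
    rw [h1, h3, ← mul_assoc, mul_inv_cancel₀ (det_ne_zero hA), one_mul]
  rw [det_re_mul hA hCpd hdet, Real.log_mul (det_re_pos_s6 hA).ne' (det_re_pos_s6 hCpd).ne']
end A5



open Matrix
open scoped ComplexOrder

set_option maxHeartbeats 3000000 in
/-- Single-step ascent: if L is Hermitian positive definite and
L' = L + L Δ(L) L, then φ(L') ≥ φ(L). -/
theorem picard_step_ascent {N n : ℕ} (hN : 0 < N) (hn : 0 < n)
    {k : Fin n → ℕ} (hk1 : ∀ i, 1 ≤ k i) (hkN : ∀ i, k i ≤ N)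
    (U : (i : Fin n) → Matrix (Fin N) (Fin (k i)) ℂ)
    (hU : ∀ i, (U i)ᴴ * U i = 1)
    (L : Matrix (Fin N) (Fin N) ℂ) (hL : L.PosDef) :
    phi U L ≤ phi U (L + L * Delta U L * L) := by
  classical
  have hNn : (0:ℝ) < n := by exact_mod_cast hn
  have hnC : (n:ℂ) ≠ 0 := Nat.cast_ne_zero.mpr hn.ne'
  set Δ := Delta U L with hΔdef
  have hLps := hL.posSemidef
  set R : Matrix (Fin N) (Fin N) ℂ := hLps.sqrt with hRdef
  have hRps : R.PosSemidef := hLps.posSemidef_sqrt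
  have hRH : Rᴴ = R := hRps.isHermitian.eq
  have hRR : R * R = L := hLps.sqrt_mul_self
  have hRpd : R.PosDef := sqrt_posDef hL
  have hRdet : R.det ≠ 0 := det_ne_zero hRpd
  have hLdet : L.det ≠ 0 := det_ne_zero hL
  -- the sample submatrices
  have hMpd : ∀ i, ((U i)ᴴ * L * (U i)).PosDef :=
    fun i => posDef_conj_rect hL (U i) (mulVec_inj_of_conj (hU i))
  -- Δ is Hermitian
  have hXH : ∀ i, (U i * ((U i)ᴴ * L * U i)⁻¹ * (U i)ᴴ).IsHermitian := fun i => by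
    have h := isHermitian_conjTranspose_mul_mul ((U i)ᴴ) (hMpd i).isHermitian.inv
    simpa [conjTranspose_conjTranspose] using h
  have hsumXH : (∑ i, U i * ((U i)ᴴ * L * U i)⁻¹ * (U i)ᴴ).IsHermitian := by
    rw [Matrix.IsHermitian, Matrix.conjTranspose_sum]
    exact Finset.sum_congr rfl fun i _ => (hXH i).eq
  have hΔH : Δ.IsHermitian := by
    rw [hΔdef, Delta]
    refine Matrix.IsHermitian.sub ?_ ((Matrix.isHermitian_one.add hL.isHermitian).inv)
    rw [Matrix.IsHermitian, Matrix.conjTranspose_smul, hsumXH.eq]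
    norm_num
  set T : Matrix (Fin N) (Fin N) ℂ := R * Δ * R with hTdef
  have hTH : T.IsHermitian := by
    have := isHermitian_conjTranspose_mul_mul R hΔH
    rwa [hRH] at this
  have h1Lpd : ((1 : Matrix (Fin N) (Fin N) ℂ) + L).PosDef :=
    Matrix.PosDef.posSemidef_add Matrix.PosSemidef.one hL
  -- the projections P i
  set P : Fin n → Matrix (Fin N) (Fin N) ℂ :=
    fun i => R * (U i * ((U i)ᴴ * L * U i)⁻¹ * (U i)ᴴ) * R with hPdef
  have hPps : ∀ i, (P i).PosSemidef := fun i => by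
    have h := ((hMpd i).inv).posSemidef.mul_mul_conjTranspose_same (R * U i)
    have h2 : (R * U i) * ((U i)ᴴ * L * U i)⁻¹ * (R * U i)ᴴ = P i := by
      simp only [hPdef, conjTranspose_mul, hRH]
      simp only [Matrix.mul_assoc]
    rwa [h2] at h
  set G : Matrix (Fin N) (Fin N) ℂ := R * ((1 : Matrix (Fin N) (Fin N) ℂ) + L)⁻¹ * R with hGdef
  have hT_eq : T = (n:ℂ)⁻¹ • (∑ i, P i) - G := by
    simp only [hTdef, hΔdef, Delta, hPdef, hGdef]
    rw [Matrix.mul_sub, Matrix.sub_mul]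
    congr 1
    rw [Matrix.mul_smul, Matrix.smul_mul, Finset.mul_sum, Finset.sum_mul]
  -- 1 - G is positive definite
  have hLLps : (L * L).PosSemidef := by
    have := Matrix.posSemidef_conjTranspose_mul_self L
    rwa [hL.isHermitian.eq] at this
  have hW0pd : (L + L * L).PosDef := hL.add_posSemidef hLLps
  have hW0inv : (L + L * L)⁻¹ = L⁻¹ - ((1 : Matrix (Fin N) (Fin N) ℂ) + L)⁻¹ := by
    apply Matrix.inv_eq_left_inv
    have e1 : (L⁻¹ - ((1 : Matrix (Fin N) (Fin N) ℂ) + L)⁻¹) * (L + L * L) =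
        L⁻¹ * L + (L⁻¹ * L) * L -
          (((1 : Matrix (Fin N) (Fin N) ℂ) + L)⁻¹ * ((1 + L) * L)) := by
      noncomm_ring
    rw [e1, Matrix.nonsing_inv_mul _ hLdet.isUnit, ← Matrix.mul_assoc,
      Matrix.nonsing_inv_mul _ (det_ne_zero h1Lpd).isUnit, one_mul]
    abel
  have hRLinvR : R * L⁻¹ * R = 1 := by
    have h1 : L⁻¹ = R⁻¹ * R⁻¹ := by rw [← hRR, Matrix.mul_inv_rev]
    rw [h1]
    calc R * (R⁻¹ * R⁻¹) * R = (R * R⁻¹) * (R⁻¹ * R) := by simp only [Matrix.mul_assoc]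
      _ = 1 := by
          rw [Matrix.mul_nonsing_inv _ hRdet.isUnit, Matrix.nonsing_inv_mul _ hRdet.isUnit,
            one_mul]
  have h1G : (1 : Matrix (Fin N) (Fin N) ℂ) - G = R * (L + L * L)⁻¹ * R := by
    rw [hW0inv, Matrix.mul_sub, Matrix.sub_mul, hRLinvR, hGdef]
  have h1Gpd : ((1 : Matrix (Fin N) (Fin N) ℂ) - G).PosDef := by
    rw [h1G]; exact posDef_conj_herm hW0pd.inv hRpd hRH
  -- 1 + T is positive definite
  have h1Tpd : ((1 : Matrix (Fin N) (Fin N) ℂ) + T).PosDef := by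
    have hs : ((n:ℂ)⁻¹ • ∑ i, P i).PosSemidef := by
      have hcast : ((n:ℂ))⁻¹ = (((n:ℝ)⁻¹ : ℝ) : ℂ) := by push_cast; ring
      rw [hcast]
      exact posSemidef_real_smul (posSemidef_sum Finset.univ _ (fun i _ => hPps i))
        (by positivity)
    have heq : (1 : Matrix (Fin N) (Fin N) ℂ) + T =
        ((n:ℂ)⁻¹ • ∑ i, P i) + ((1 : Matrix (Fin N) (Fin N) ℂ) - G) := by
      rw [hT_eq]; abel
    rw [heq]
    exact Matrix.PosDef.posSemidef_add hs h1Gpd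
  have h1Tdet : ((1 : Matrix (Fin N) (Fin N) ℂ) + T).det ≠ 0 := det_ne_zero h1Tpd
  -- L' = R (1+T) R
  have hLTL : L * Δ * L = R * T * R := by
    rw [hTdef, ← hRR]; simp only [Matrix.mul_assoc]
  have hL'eq : L + L * Δ * L = R * ((1 : Matrix (Fin N) (Fin N) ℂ) + T) * R := by
    rw [hLTL, Matrix.mul_add, Matrix.add_mul, Matrix.mul_one, hRR]
  have hL'pd : (L + L * Δ * L).PosDef := by
    rw [hL'eq]; exact posDef_conj_herm h1Tpd hRpd hRH
  have h1L'pd : ((1 : Matrix (Fin N) (Fin N) ℂ) + (L + L * Δ * L)).PosDef :=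
    Matrix.PosDef.posSemidef_add Matrix.PosSemidef.one hL'pd
  -- per-sample inequality
  have per_i : ∀ i, Real.log (((U i)ᴴ * L * U i).det.re) +
      ((P i).trace.re - (P i * ((1 : Matrix (Fin N) (Fin N) ℂ) + T)⁻¹).trace.re) ≤
      Real.log (((U i)ᴴ * (L + L * Δ * L) * U i).det.re) := by
    intro i
    set Si : Matrix (Fin (k i)) (Fin (k i)) ℂ := ((hMpd i).inv).posSemidef.sqrt with hSidef
    have hSips : Si.PosSemidef := ((hMpd i).inv).posSemidef.posSemidef_sqrt
    have hSiH : Siᴴ = Si := hSips.isHermitian.eq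
    have hSiSi : Si * Si = ((U i)ᴴ * L * U i)⁻¹ := ((hMpd i).inv).posSemidef.sqrt_mul_self
    set Vi : Matrix (Fin N) (Fin (k i)) ℂ := R * U i * Si with hVidef
    have hViH : Viᴴ = Si * ((U i)ᴴ * R) := by
      rw [hVidef, conjTranspose_mul, conjTranspose_mul, hRH, hSiH]
    have hVV : Viᴴ * Vi = 1 := by
      rw [hViH, hVidef]
      calc Si * ((U i)ᴴ * R) * (R * U i * Si) = Si * ((U i)ᴴ * (R * R) * U i) * Si := by
            simp only [Matrix.mul_assoc]
        _ = 1 := by rw [hRR]; exact sqrt_inv_conj (hMpd i)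
    have hVVH : Vi * Viᴴ = P i := by
      rw [hViH, hVidef]
      simp only [hPdef]
      calc (R * U i * Si) * (Si * ((U i)ᴴ * R)) = R * (U i * (Si * Si) * (U i)ᴴ) * R := by
            simp only [Matrix.mul_assoc]
        _ = R * (U i * ((U i)ᴴ * L * U i)⁻¹ * (U i)ᴴ) * R := by rw [hSiSi]
    set Yi : Matrix (Fin (k i)) (Fin (k i)) ℂ :=
      Viᴴ * ((1 : Matrix (Fin N) (Fin N) ℂ) + T) * Vi with hYidef
    have hYipd : Yi.PosDef := posDef_conj_rect h1Tpd Vi (mulVec_inj_of_conj hVV)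
    have hM'pd : (((U i)ᴴ) * (L + L * Δ * L) * U i).PosDef :=
      posDef_conj_rect hL'pd (U i) (mulVec_inj_of_conj (hU i))
    have hlog : Real.log ((((U i)ᴴ) * (L + L * Δ * L) * U i).det.re) =
        Real.log (((U i)ᴴ * L * U i).det.re) + Real.log (Yi.det.re) := by
      have h0 := log_det_conj_sqrt (hMpd i) hM'pd
      have h1 : Si * (((U i)ᴴ) * (L + L * Δ * L) * U i) * Si = Yi := by
        rw [hYidef, hViH, hVidef, hL'eq]
        simp only [Matrix.mul_assoc]
      rw [← h1]
      exact h0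
    have hlb : (k i : ℝ) - (Yi⁻¹).trace.re ≤ Real.log (Yi.det.re) := by
      have := card_sub_trace_inv_le_log_det hYipd
      simpa [Fintype.card_fin] using this
    have htr1 : (Yi⁻¹).trace.re ≤
        (Viᴴ * ((1 : Matrix (Fin N) (Fin N) ℂ) + T)⁻¹ * Vi).trace.re := by
      apply trace_re_mono
      rw [hYidef]
      exact choi_inv h1Tpd Vi hVV
    have htr2 : (Viᴴ * ((1 : Matrix (Fin N) (Fin N) ℂ) + T)⁻¹ * Vi).trace =
        (P i * ((1 : Matrix (Fin N) (Fin N) ℂ) + T)⁻¹).trace := by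
      calc (Viᴴ * ((1 : Matrix (Fin N) (Fin N) ℂ) + T)⁻¹ * Vi).trace
          = (Viᴴ * (((1 : Matrix (Fin N) (Fin N) ℂ) + T)⁻¹ * Vi)).trace := by
            rw [Matrix.mul_assoc Viᴴ _ Vi]
        _ = ((((1 : Matrix (Fin N) (Fin N) ℂ) + T)⁻¹ * Vi) * Viᴴ).trace :=
            Matrix.trace_mul_comm _ _
        _ = (((1 : Matrix (Fin N) (Fin N) ℂ) + T)⁻¹ * (Vi * Viᴴ)).trace := by
            rw [Matrix.mul_assoc _ Vi Viᴴ]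
        _ = (((1 : Matrix (Fin N) (Fin N) ℂ) + T)⁻¹ * P i).trace := by rw [hVVH]
        _ = (P i * ((1 : Matrix (Fin N) (Fin N) ℂ) + T)⁻¹).trace :=
            Matrix.trace_mul_comm _ _
    have htrP : (P i).trace = ((k i : ℕ) : ℂ) := by
      calc (P i).trace = (Vi * Viᴴ).trace := by rw [hVVH]
        _ = (Viᴴ * Vi).trace := Matrix.trace_mul_comm _ _
        _ = ((k i : ℕ) : ℂ) := by rw [hVV, Matrix.trace_one]; simp
    have e1 : (P i).trace.re = (k i : ℝ) := by rw [htrP]; simp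
    have e2 : (P i * ((1 : Matrix (Fin N) (Fin N) ℂ) + T)⁻¹).trace.re =
        (Viᴴ * ((1 : Matrix (Fin N) (Fin N) ℂ) + T)⁻¹ * Vi).trace.re := by rw [htr2]
    rw [hlog]
    have hfin : (P i).trace.re -
        (P i * ((1 : Matrix (Fin N) (Fin N) ℂ) + T)⁻¹).trace.re ≤ Real.log (Yi.det.re) := by
      rw [e1, e2]
      linarith
    linarith
  -- the global (normalization) term
  set E : Matrix (Fin N) (Fin N) ℂ := (h1Lpd.inv).posSemidef.sqrt with hEdef
  have hEps : E.PosSemidef := (h1Lpd.inv).posSemidef.posSemidef_sqrt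
  have hEH : Eᴴ = E := hEps.isHermitian.eq
  have hEE : E * E = ((1 : Matrix (Fin N) (Fin N) ℂ) + L)⁻¹ :=
    (h1Lpd.inv).posSemidef.sqrt_mul_self
  have hEpd : E.PosDef := sqrt_posDef h1Lpd.inv
  have hE1 : E * ((1 : Matrix (Fin N) (Fin N) ℂ) + L) * E = 1 := sqrt_inv_conj h1Lpd
  set Z : Matrix (Fin N) (Fin N) ℂ :=
    E * ((1 : Matrix (Fin N) (Fin N) ℂ) + (L + L * Δ * L)) * E with hZdef
  have hZpd : Z.PosDef := posDef_conj_herm h1L'pd hEpd hEH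
  have hlogZ : Real.log (((1 : Matrix (Fin N) (Fin N) ℂ) + (L + L * Δ * L)).det.re) =
      Real.log (((1 : Matrix (Fin N) (Fin N) ℂ) + L).det.re) + Real.log (Z.det.re) := by
    have h0 := log_det_conj_sqrt h1Lpd h1L'pd
    rw [hZdef, hEdef]
    exact h0
  have hZsplit : Z = 1 + E * (R * T * R) * E := by
    rw [hZdef, ← hLTL]
    have h1 : (1 : Matrix (Fin N) (Fin N) ℂ) + (L + L * Δ * L) =
        ((1 : Matrix (Fin N) (Fin N) ℂ) + L) + L * Δ * L := by abel
    rw [h1, Matrix.mul_add, Matrix.add_mul, hE1]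
  have hZtr : Z.trace = (N : ℂ) + (T * G).trace := by
    rw [hZsplit, Matrix.trace_add, Matrix.trace_one]
    congr 1
    · simp
    · calc (E * (R * T * R) * E).trace
          = (E * (E * (R * T * R))).trace := Matrix.trace_mul_comm _ _
        _ = (((E * E) * R) * (T * R)).trace := by simp only [Matrix.mul_assoc]
        _ = ((T * R) * ((E * E) * R)).trace := Matrix.trace_mul_comm _ _
        _ = (T * G).trace := by rw [hEE, hGdef]; simp only [Matrix.mul_assoc]
  have hub : Real.log (Z.det.re) ≤ (T * G).trace.re := by
    have h0 := log_det_le_trace_sub_card hZpd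
    rw [hZtr] at h0
    simp only [Complex.add_re, Complex.natCast_re, Fintype.card_fin] at h0
    linarith
  -- key algebraic identity
  have hsumP : (∑ i, P i) = (n:ℂ) • (T + G) := by
    have h2 : (n:ℂ)⁻¹ • (∑ i, P i) = T + G := by rw [hT_eq]; abel
    calc ∑ i, P i = (n:ℂ) • ((n:ℂ)⁻¹ • ∑ i, P i) := by
          rw [smul_smul, mul_inv_cancel₀ hnC, one_smul]
      _ = (n:ℂ) • (T + G) := by rw [h2]
  have hTJ : T * ((1 : Matrix (Fin N) (Fin N) ℂ) + T)⁻¹ =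
      1 - ((1 : Matrix (Fin N) (Fin N) ℂ) + T)⁻¹ := by
    have h := Matrix.mul_nonsing_inv _ h1Tdet.isUnit
    rw [Matrix.add_mul, one_mul] at h
    exact eq_sub_of_add_eq' h
  have hJT : ((1 : Matrix (Fin N) (Fin N) ℂ) + T)⁻¹ * T =
      1 - ((1 : Matrix (Fin N) (Fin N) ℂ) + T)⁻¹ := by
    have h := Matrix.nonsing_inv_mul _ h1Tdet.isUnit
    rw [Matrix.mul_add, mul_one] at h
    exact eq_sub_of_add_eq' h
  have hK : T * ((1 : Matrix (Fin N) (Fin N) ℂ) + T)⁻¹ * T =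
      T + ((1 : Matrix (Fin N) (Fin N) ℂ) + T)⁻¹ - 1 := by
    rw [hTJ, Matrix.sub_mul, one_mul, hJT]
    abel
  have keyC : (∑ i, ((P i).trace - (P i * ((1 : Matrix (Fin N) (Fin N) ℂ) + T)⁻¹).trace)) -
      (n:ℂ) * (T * G).trace =
      (n:ℂ) * ((((1 : Matrix (Fin N) (Fin N) ℂ) - G) *
        (T * ((1 : Matrix (Fin N) (Fin N) ℂ) + T)⁻¹ * T)).trace) := by
    have h1 : ∑ i, ((P i).trace - (P i * ((1 : Matrix (Fin N) (Fin N) ℂ) + T)⁻¹).trace) =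
        (∑ i, P i).trace - ((∑ i, P i) * ((1 : Matrix (Fin N) (Fin N) ℂ) + T)⁻¹).trace := by
      rw [Finset.sum_sub_distrib]
      congr 1
      · rw [← Matrix.trace_sum]
      · rw [← Matrix.trace_sum, Finset.sum_mul]
    rw [h1, hsumP, Matrix.trace_smul, Matrix.smul_mul, Matrix.trace_smul, hK]
    have r1 : (T * ((1 : Matrix (Fin N) (Fin N) ℂ) + T)⁻¹).trace =
        (1 : Matrix (Fin N) (Fin N) ℂ).trace -
          (((1 : Matrix (Fin N) (Fin N) ℂ) + T)⁻¹).trace := by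
      rw [hTJ, Matrix.trace_sub]
    have r2 : (T * G).trace = (G * T).trace := Matrix.trace_mul_comm _ _
    have e3 : (T + G) * ((1 : Matrix (Fin N) (Fin N) ℂ) + T)⁻¹ =
        T * ((1 : Matrix (Fin N) (Fin N) ℂ) + T)⁻¹ +
        G * ((1 : Matrix (Fin N) (Fin N) ℂ) + T)⁻¹ := Matrix.add_mul _ _ _
    have e4 : ((1 : Matrix (Fin N) (Fin N) ℂ) - G) *
        (T + ((1 : Matrix (Fin N) (Fin N) ℂ) + T)⁻¹ - 1) =
        (T + ((1 : Matrix (Fin N) (Fin N) ℂ) + T)⁻¹ - 1) -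
        (G * T + G * ((1 : Matrix (Fin N) (Fin N) ℂ) + T)⁻¹ - G) := by
      noncomm_ring
    rw [e3, e4]
    simp only [Matrix.trace_add, Matrix.trace_sub, smul_eq_mul]
    rw [r1] at *
    linear_combination (-(n:ℂ)) * r2
  -- key real identity
  have keyR : (∑ i, ((P i).trace.re -
        (P i * ((1 : Matrix (Fin N) (Fin N) ℂ) + T)⁻¹).trace.re)) -
      (n:ℝ) * (T * G).trace.re =
      (n:ℝ) * ((((1 : Matrix (Fin N) (Fin N) ℂ) - G) *
        (T * ((1 : Matrix (Fin N) (Fin N) ℂ) + T)⁻¹ * T)).trace.re) := by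
    have h := congrArg Complex.re keyC
    simp only [Complex.sub_re, Complex.re_sum] at h
    rw [show ((n:ℂ)) = (((n:ℝ) : ℝ) : ℂ) by push_cast; rfl] at h
    simpa [Complex.re_ofReal_mul, Complex.sub_re] using h
  -- positivity of the remainder
  have hTJT_ps : (T * ((1 : Matrix (Fin N) (Fin N) ℂ) + T)⁻¹ * T).PosSemidef := by
    have := (h1Tpd.inv).posSemidef.conjTranspose_mul_mul_same T
    rwa [hTH.eq] at this
  have hq : 0 ≤ (((1 : Matrix (Fin N) (Fin N) ℂ) - G) *
      (T * ((1 : Matrix (Fin N) (Fin N) ℂ) + T)⁻¹ * T)).trace.re :=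
    trace_re_mul_nonneg h1Gpd.posSemidef hTJT_ps
  -- final assembly
  have sumineq := Finset.sum_le_sum (fun i (_ : i ∈ Finset.univ) => per_i i)
  rw [Finset.sum_add_distrib] at sumineq
  have globn : (n:ℝ) * Real.log (((1 : Matrix (Fin N) (Fin N) ℂ) + (L + L * Δ * L)).det.re) ≤
      (n:ℝ) * Real.log (((1 : Matrix (Fin N) (Fin N) ℂ) + L).det.re) +
      (n:ℝ) * (T * G).trace.re := by
    rw [hlogZ, mul_add]
    have := mul_le_mul_of_nonneg_left hub (le_of_lt hNn)
    linarith
  simp only [phi]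
  have hq' : 0 ≤ (n:ℝ) * ((((1 : Matrix (Fin N) (Fin N) ℂ) - G) *
      (T * ((1 : Matrix (Fin N) (Fin N) ℂ) + T)⁻¹ * T)).trace.re) :=
    mul_nonneg (le_of_lt hNn) hq
  linarith [sumineq, globn, keyR, hq']
end PicardAux
end

section
/- The function h(S) = (1/n)∑_{i=1}^n log det(Uᵢ* S⁻¹ Uᵢ) − log det(I+S) is convex on the set of N×N Hermitian positive definite complex matrices; that is, for all Hermitian positive definite S, T and all t ∈ [0,1], h(tS + (1−t)T) ≤ t·h(S) + (1−t)·h(T). -/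
set_option linter.unusedSectionVars false

open Matrix
open scoped ComplexOrder

namespace HFunAux

open scoped MatrixOrder

variable {m l : Type*} [Fintype m] [DecidableEq m] [Fintype l] [DecidableEq l]

lemma herm_smul {A : Matrix m m ℂ} (hA : A.IsHermitian) (c : ℝ) :
    ((c : ℂ) • A).IsHermitian := by
  rw [Matrix.IsHermitian, conjTranspose_smul, hA, Complex.star_def, Complex.conj_ofReal]

lemma psd_smul {A : Matrix m m ℂ} (hA : A.PosSemidef) {c : ℝ} (hc : 0 ≤ c) :
    ((c : ℂ) • A).PosSemidef := by
  refine posSemidef_iff_dotProduct_mulVec.mpr ⟨herm_smul hA.1 c, fun x => ?_⟩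
  rw [smul_mulVec, dotProduct_smul, smul_eq_mul]
  exact mul_nonneg (Complex.zero_le_real.mpr hc) (hA.dotProduct_mulVec_nonneg x)

lemma pd_smul {A : Matrix m m ℂ} (hA : A.PosDef) {c : ℝ} (hc : 0 < c) :
    ((c : ℂ) • A).PosDef := by
  refine posDef_iff_dotProduct_mulVec.mpr ⟨herm_smul hA.1 c, fun x hx => ?_⟩
  rw [smul_mulVec, dotProduct_smul, smul_eq_mul]
  exact mul_pos (Complex.zero_lt_real.mpr hc) (hA.dotProduct_mulVec_pos hx)

lemma posDef_conj {A : Matrix m m ℂ} (hA : A.PosDef) (B : Matrix m l ℂ)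
    (hinj : ∀ x, B *ᵥ x = 0 → x = 0) : (Bᴴ * A * B).PosDef := by
  refine posDef_iff_dotProduct_mulVec.mpr ⟨isHermitian_conjTranspose_mul_mul B hA.1, fun x hx => ?_⟩
  have hBx : B *ᵥ x ≠ 0 := fun h0 => hx (hinj x h0)
  simpa only [star_mulVec, dotProduct_mulVec, vecMul_vecMul] using hA.dotProduct_mulVec_pos hBx

lemma posDef_combo {S T : Matrix m m ℂ} (hS : S.PosDef) (hT : T.PosDef)
    {t : ℝ} (ht0 : 0 ≤ t) (ht1 : t ≤ 1) :
    ((t : ℂ) • S + ((1 - t : ℝ) : ℂ) • T).PosDef := by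
  rcases eq_or_lt_of_le ht0 with h0 | h0
  · rw [← h0]
    norm_num
    exact hT
  · rcases eq_or_lt_of_le ht1 with h1 | h1
    · rw [h1]
      norm_num
      exact hS
    · exact (pd_smul hS h0).add_posSemidef (pd_smul hT (by linarith)).posSemidef

lemma det_eq_re {A : Matrix m m ℂ} (hA : A.PosDef) : A.det = (A.det.re : ℂ) := by
  have h := Complex.pos_iff.mp hA.det_pos
  exact Complex.ext rfl (by simp [← h.2])

lemma det_re_pos {A : Matrix m m ℂ} (hA : A.PosDef) : 0 < A.det.re :=
  (Complex.pos_iff.mp hA.det_pos).1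

/-- determinant of a•C + b•1 for Hermitian C. -/
lemma det_smul_add_smul_one {C : Matrix m m ℂ} (hC : C.IsHermitian) (a b : ℝ) :
    ((a : ℂ) • C + (b : ℂ) • 1).det
      = ((∏ i, (a * hC.eigenvalues i + b) : ℝ) : ℂ) := by
  set V : Matrix m m ℂ := (hC.eigenvectorUnitary : Matrix m m ℂ) with hVdef
  have hV : V * star V = 1 := Matrix.mem_unitaryGroup_iff.mp (hC.eigenvectorUnitary).2
  have hV' : star V * V = 1 := Matrix.mem_unitaryGroup_iff'.mp (hC.eigenvectorUnitary).2
  set D : Matrix m m ℂ := diagonal (RCLike.ofReal ∘ hC.eigenvalues) with hDdef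
  have key : (a : ℂ) • C + (b : ℂ) • 1
      = V * ((a : ℂ) • D + (b : ℂ) • 1) * star V := by
    rw [Matrix.mul_add, Matrix.add_mul, Matrix.mul_smul, Matrix.smul_mul,
      Matrix.mul_smul, Matrix.smul_mul, Matrix.mul_one, hV]
    nth_rw 1 [hC.spectral_theorem]
    simp only [Unitary.conjStarAlgAut_apply]
    rfl
  have hdiag : (a : ℂ) • D + (b : ℂ) • 1
      = diagonal (fun i => ((a * hC.eigenvalues i + b : ℝ) : ℂ)) := by
    rw [hDdef, ← diagonal_one, ← diagonal_smul, ← diagonal_smul, diagonal_add]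
    congr 1
    funext i
    simp [smul_eq_mul]
  have hdV : V.det * (star V).det = 1 := by rw [← det_mul, hV, det_one]
  rw [key, det_mul, det_mul, mul_comm, ← mul_assoc, mul_comm (star V).det, hdV, one_mul,
    hdiag, det_diagonal]
  push_cast
  rfl

/-- PosDef square root facts -/
lemma sqrt_posDef {A : Matrix m m ℂ} (hA : A.PosDef) : (CFC.sqrt A).PosDef := by
  have hdet : (CFC.sqrt A).det * (CFC.sqrt A).det = A.det := by
    rw [← det_mul, CFC.sqrt_mul_sqrt_self A hA.posSemidef.nonneg]
  have hne : (CFC.sqrt A).det ≠ 0 := by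
    intro h
    rw [h, mul_zero] at hdet
    exact hA.det_pos.ne' hdet.symm
  -- PosSemidef with nonzero det is PosDef
  exact (CFC.sqrt_nonneg A).posSemidef.posDef_iff_isUnit.mpr
    ((Matrix.isUnit_iff_isUnit_det _).mpr hne.isUnit)

/-- Concavity of log det on positive definite matrices. -/
lemma logdet_concave {A B : Matrix m m ℂ} (hA : A.PosDef) (hB : B.PosDef)
    {t : ℝ} (ht0 : 0 ≤ t) (ht1 : t ≤ 1) :
    t * Real.log A.det.re + (1 - t) * Real.log B.det.re
      ≤ Real.log (((t : ℂ) • A + ((1 - t : ℝ) : ℂ) • B).det.re) := by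
  set Q := CFC.sqrt B with hQdef
  have hQpd : Q.PosDef := sqrt_posDef hB
  have hQQ : Q * Q = B := CFC.sqrt_mul_sqrt_self B hB.posSemidef.nonneg
  have hQdet : IsUnit Q.det := hQpd.det_pos.ne'.isUnit
  have hQH : Q.IsHermitian := hQpd.isHermitian
  have hQinv : (Q⁻¹).IsHermitian := hQH.inv
  set M := Q⁻¹ * A * Q⁻¹ with hMdef
  have hM : M.PosDef := by
    have := posDef_conj hA Q⁻¹ (fun x hx => by
      have : Q *ᵥ (Q⁻¹ *ᵥ x) = Q *ᵥ 0 := by rw [hx]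
      rwa [mulVec_mulVec, mul_nonsing_inv Q hQdet, one_mulVec, mulVec_zero] at this)
    rwa [hQinv.eq] at this
  have hQMQ : Q * M * Q = A := by
    rw [hMdef]
    simp only [Matrix.mul_assoc]
    rw [nonsing_inv_mul Q hQdet, Matrix.mul_one, ← Matrix.mul_assoc,
      mul_nonsing_inv Q hQdet, Matrix.one_mul]
  set lam := hM.isHermitian.eigenvalues with hlam
  have hlampos : ∀ i, 0 < lam i := hM.eigenvalues_pos
  have key : (t : ℂ) • A + ((1 - t : ℝ) : ℂ) • B
      = Q * ((t : ℂ) • M + ((1 - t : ℝ) : ℂ) • 1) * Q := by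
    rw [Matrix.mul_add, Matrix.add_mul, Matrix.mul_smul, Matrix.smul_mul,
      Matrix.mul_smul, Matrix.smul_mul, Matrix.mul_one, hQQ, hQMQ]
  have hdQ : Q.det * Q.det = ((B.det.re : ℝ) : ℂ) := by
    rw [← det_mul, hQQ]; exact det_eq_re hB
  have hdett : ((t : ℂ) • A + ((1 - t : ℝ) : ℂ) • B).det
      = (((B.det.re * ∏ i, (t * lam i + (1 - t))) : ℝ) : ℂ) := by
    rw [key, det_mul, det_mul, det_smul_add_smul_one hM.isHermitian t (1 - t),
      mul_right_comm, hdQ, Complex.ofReal_mul]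
  have hdetA : A.det.re = B.det.re * ∏ i, lam i := by
    have h2 : A.det = (((B.det.re * ∏ i, lam i) : ℝ) : ℂ) := by
      rw [← hQMQ, det_mul, det_mul, mul_right_comm, hdQ,
        hM.isHermitian.det_eq_prod_eigenvalues, Complex.ofReal_mul, Complex.ofReal_prod]
      rfl
    rw [h2, Complex.ofReal_re]
  have hfacpos : ∀ i : m, 0 < t * lam i + (1 - t) := by
    intro i
    rcases lt_or_eq_of_le ht1 with h | h
    · have := mul_nonneg ht0 (hlampos i).le
      linarith
    · have := mul_pos (show (0:ℝ) < t by linarith) (hlampos i)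
      linarith
  have hlog1 : ∀ i : m, t * Real.log (lam i) ≤ Real.log (t * lam i + (1 - t)) := by
    intro i
    have hc := (strictConcaveOn_log_Ioi.concaveOn).2 (Set.mem_Ioi.mpr (hlampos i))
      (Set.mem_Ioi.mpr one_pos) ht0 (by linarith : (0:ℝ) ≤ 1 - t) (by ring)
    simpa [smul_eq_mul, Real.log_one] using hc
  have hre : (((t : ℂ) • A + ((1 - t : ℝ) : ℂ) • B).det.re)
      = B.det.re * ∏ i, (t * lam i + (1 - t)) := by rw [hdett, Complex.ofReal_re]
  rw [hre, Real.log_mul (det_re_pos hB).ne'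
      (Finset.prod_pos (fun i _ => hfacpos i)).ne',
    Real.log_prod (fun i _ => (hfacpos i).ne'), hdetA,
    Real.log_mul (det_re_pos hB).ne' (Finset.prod_pos (fun i _ => hlampos i)).ne',
    Real.log_prod (fun i _ => (hlampos i).ne')]
  have hsum : ∑ i, t * Real.log (lam i) ≤ ∑ i, Real.log (t * lam i + (1 - t)) :=
    Finset.sum_le_sum (fun i _ => hlog1 i)
  rw [← Finset.mul_sum] at hsum
  linarith

/-- Monotonicity of det on the Loewner order. -/
lemma det_re_mono {A B : Matrix m m ℂ} (hA : A.PosDef) (hAB : (B - A).PosSemidef) :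
    A.det.re ≤ B.det.re := by
  set Q := CFC.sqrt A with hQdef
  have hQpd : Q.PosDef := sqrt_posDef hA
  have hQQ : Q * Q = A := CFC.sqrt_mul_sqrt_self A hA.posSemidef.nonneg
  have hQdet : IsUnit Q.det := hQpd.det_pos.ne'.isUnit
  have hQinv : (Q⁻¹).IsHermitian := hQpd.isHermitian.inv
  set C := Q⁻¹ * (B - A) * Q⁻¹ with hCdef
  have hC : C.PosSemidef := by
    have := hAB.conjTranspose_mul_mul_same Q⁻¹
    rwa [hQinv.eq] at this
  have hQCQ : Q * C * Q = B - A := by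
    rw [hCdef]
    simp only [Matrix.mul_assoc]
    rw [nonsing_inv_mul Q hQdet, Matrix.mul_one, ← Matrix.mul_assoc,
      mul_nonsing_inv Q hQdet, Matrix.one_mul]
  set mu := hC.isHermitian.eigenvalues with hmu
  have hmunn : ∀ i, 0 ≤ mu i := hC.eigenvalues_nonneg
  have key : B = Q * (((1:ℝ) : ℂ) • C + ((1:ℝ) : ℂ) • 1) * Q := by
    push_cast
    rw [one_smul, one_smul, Matrix.mul_add, Matrix.add_mul, Matrix.mul_one, hQQ, hQCQ]
    abel
  have hdQ : Q.det * Q.det = ((A.det.re : ℝ) : ℂ) := by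
    rw [← det_mul, hQQ]; exact det_eq_re hA
  have hdetB : B.det = (((A.det.re * ∏ i, (1 * mu i + 1)) : ℝ) : ℂ) := by
    rw [key, det_mul, det_mul, det_smul_add_smul_one hC.isHermitian 1 1,
      mul_right_comm, hdQ, Complex.ofReal_mul]
  have hre : B.det.re = A.det.re * ∏ i, (1 * mu i + 1) := by rw [hdetB, Complex.ofReal_re]
  rw [hre]
  have hprod : (1:ℝ) ≤ ∏ i, (1 * mu i + 1) := by
    have := Finset.prod_le_prod (s := Finset.univ) (f := fun _ : m => (1:ℝ)) (g := fun i => 1 * mu i + 1)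
      (fun i _ => zero_le_one)
      (fun i _ => by show (1:ℝ) ≤ 1 * mu i + 1; nlinarith [hmunn i])
    simpa using this
  nlinarith [det_re_pos hA, hprod]

lemma compress_posDef {A : Matrix m m ℂ} (hA : A.PosDef) {U : Matrix m l ℂ}
    (hU : Uᴴ * U = 1) : (Uᴴ * A * U).PosDef :=
  posDef_conj hA U (fun x hx => by
    have h : Uᴴ *ᵥ (U *ᵥ x) = 0 := by rw [hx, mulVec_zero]
    rwa [mulVec_mulVec, hU, one_mulVec] at h)

/-- Key sandwich lemma: U (Uᴴ S⁻¹ U)⁻¹ Uᴴ ≼ S. -/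
lemma sandwich {S : Matrix m m ℂ} (hS : S.PosDef) {U : Matrix m l ℂ}
    (hU : Uᴴ * U = 1) :
    (S - U * (Uᴴ * S⁻¹ * U)⁻¹ * Uᴴ).PosSemidef := by
  have hSdet : IsUnit S.det := hS.det_pos.ne'.isUnit
  set R := S⁻¹ with hR
  have hRpd : R.PosDef := hS.inv
  have hG : (Uᴴ * R * U).PosDef := compress_posDef hRpd hU
  have hGdet : IsUnit (Uᴴ * R * U).det := hG.det_pos.ne'.isUnit
  set F := (Uᴴ * R * U)⁻¹ with hF
  have hFH : F.IsHermitian := hG.isHermitian.inv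
  set Q := CFC.sqrt R with hQ
  have hQpd : Q.PosDef := sqrt_posDef hRpd
  have hQH : Q.IsHermitian := hQpd.isHermitian
  have hQQ : Q * Q = R := CFC.sqrt_mul_sqrt_self R hRpd.posSemidef.nonneg
  set P := Q * U * F * Uᴴ * Q with hP
  have hPH : P.IsHermitian := by
    rw [Matrix.IsHermitian, hP]
    simp only [conjTranspose_mul, conjTranspose_conjTranspose, hQH.eq, hFH.eq,
      Matrix.mul_assoc]
  have hPP : P * P = P := by
    rw [hP]
    have h1 : Uᴴ * Q * (Q * U) = Uᴴ * R * U := by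
      rw [Matrix.mul_assoc Uᴴ Q (Q * U), ← Matrix.mul_assoc Q Q U, hQQ,
        ← Matrix.mul_assoc]
    have h2 : F * (Uᴴ * R * U) * F = F := by
      rw [hF, Matrix.nonsing_inv_mul _ hGdet, Matrix.one_mul]
    calc Q * U * F * Uᴴ * Q * (Q * U * F * Uᴴ * Q)
        = Q * U * (F * (Uᴴ * Q * (Q * U)) * F) * Uᴴ * Q := by
          simp only [Matrix.mul_assoc]
      _ = Q * U * F * Uᴴ * Q := by rw [h1, h2]
  have hIP : (1 - P).PosSemidef := by
    have hid : (1 - P) = (1 - P)ᴴ * (1 - P) := by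
      simp only [conjTranspose_sub, conjTranspose_one, hPH.eq, Matrix.mul_sub,
        Matrix.sub_mul, Matrix.mul_one, Matrix.one_mul, hPP]
      abel
    rw [hid]
    exact posSemidef_conjTranspose_mul_self _
  have hSR : S * R = 1 := Matrix.mul_nonsing_inv S hSdet
  have hRS : R * S = 1 := Matrix.nonsing_inv_mul S hSdet
  have key : S - U * F * Uᴴ = (S * Q) * (1 - P) * (S * Q)ᴴ := by
    have hSQH : (S * Q)ᴴ = Q * S := by
      rw [conjTranspose_mul, hQH.eq, hS.isHermitian.eq]
    rw [hSQH, Matrix.mul_sub, Matrix.sub_mul, Matrix.mul_one]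
    congr 1
    · -- S = S * Q * (Q * S)
      symm
      rw [Matrix.mul_assoc S Q (Q * S), ← Matrix.mul_assoc Q Q S, hQQ,
        ← Matrix.mul_assoc, hSR, Matrix.one_mul]
    · -- U * F * Uᴴ = S * Q * P * (Q * S)
      symm
      rw [hP]
      calc S * Q * (Q * U * F * Uᴴ * Q) * (Q * S)
          = (S * (Q * Q)) * (U * F * Uᴴ * (Q * Q * S)) := by
            simp only [Matrix.mul_assoc]
        _ = U * F * Uᴴ := by
            rw [hQQ, hSR, Matrix.one_mul, hRS, Matrix.mul_one]
  rw [key]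
  exact hIP.mul_mul_conjTranspose_same (S * Q)

/-- Matrix concavity of S ↦ (Uᴴ S⁻¹ U)⁻¹. -/
lemma F_concave {S T : Matrix m m ℂ} (hS : S.PosDef) (hT : T.PosDef)
    {U : Matrix m l ℂ} (hU : Uᴴ * U = 1) {t : ℝ} (ht0 : 0 ≤ t) (ht1 : t ≤ 1) :
    ((Uᴴ * ((t : ℂ) • S + ((1 - t : ℝ) : ℂ) • T)⁻¹ * U)⁻¹
      - ((t : ℂ) • (Uᴴ * S⁻¹ * U)⁻¹ + ((1 - t : ℝ) : ℂ) • (Uᴴ * T⁻¹ * U)⁻¹)).PosSemidef := by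
  set St := (t : ℂ) • S + ((1 - t : ℝ) : ℂ) • T with hStdef
  have hSt : St.PosDef := posDef_combo hS hT ht0 ht1
  have hStdet : IsUnit St.det := hSt.det_pos.ne'.isUnit
  have hGi : (Uᴴ * St⁻¹ * U).PosDef := compress_posDef hSt.inv hU
  have hGidet : IsUnit (Uᴴ * St⁻¹ * U).det := hGi.det_pos.ne'.isUnit
  set G := (Uᴴ * St⁻¹ * U)⁻¹ with hG
  have hGH : G.IsHermitian := hGi.isHermitian.inv
  set Z := St⁻¹ * U * G with hZ
  have hUZ : Uᴴ * Z = 1 := by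
    rw [hZ, ← Matrix.mul_assoc, ← Matrix.mul_assoc, hG, Matrix.mul_nonsing_inv _ hGidet]
  have hZU : Zᴴ * U = 1 := by
    have := congrArg conjTranspose hUZ
    rwa [conjTranspose_mul, conjTranspose_conjTranspose, conjTranspose_one] at this
  have hZH : Zᴴ = G * Uᴴ * St⁻¹ := by
    rw [hZ, conjTranspose_mul, conjTranspose_mul, hGH.eq, hSt.inv.isHermitian.eq,
      Matrix.mul_assoc]
  have hZStZ : Zᴴ * St * Z = G := by
    rw [hZH, hZ]
    calc G * Uᴴ * St⁻¹ * St * (St⁻¹ * U * G)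
        = G * ((Uᴴ * ((St⁻¹ * St) * St⁻¹) * U) * G) := by simp only [Matrix.mul_assoc]
      _ = G * ((Uᴴ * St⁻¹ * U) * G) := by
          rw [Matrix.nonsing_inv_mul _ hStdet, Matrix.one_mul, Matrix.mul_assoc]
      _ = G := by rw [hG, Matrix.mul_nonsing_inv _ hGidet, Matrix.mul_one]
  have hconj : ∀ (W : Matrix l l ℂ), Zᴴ * (U * W * Uᴴ) * Z = W := by
    intro W
    calc Zᴴ * (U * W * Uᴴ) * Z = (Zᴴ * U) * W * (Uᴴ * Z) := by
          simp only [Matrix.mul_assoc]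
      _ = W := by rw [hZU, hUZ, Matrix.one_mul, Matrix.mul_one]
  have e1 : Zᴴ * (S - U * (Uᴴ * S⁻¹ * U)⁻¹ * Uᴴ) * Z
      = Zᴴ * S * Z - (Uᴴ * S⁻¹ * U)⁻¹ := by
    rw [Matrix.mul_sub, Matrix.sub_mul, hconj]
  have e2 : Zᴴ * (T - U * (Uᴴ * T⁻¹ * U)⁻¹ * Uᴴ) * Z
      = Zᴴ * T * Z - (Uᴴ * T⁻¹ * U)⁻¹ := by
    rw [Matrix.mul_sub, Matrix.sub_mul, hconj]
  have e3 : (t : ℂ) • (Zᴴ * S * Z) + ((1 - t : ℝ) : ℂ) • (Zᴴ * T * Z) = G := by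
    rw [← hZStZ, hStdef, Matrix.mul_add, Matrix.add_mul, Matrix.mul_smul,
      Matrix.smul_mul, Matrix.mul_smul, Matrix.smul_mul]
  have key : G - ((t : ℂ) • (Uᴴ * S⁻¹ * U)⁻¹ + ((1 - t : ℝ) : ℂ) • (Uᴴ * T⁻¹ * U)⁻¹)
      = (t : ℂ) • (Zᴴ * (S - U * (Uᴴ * S⁻¹ * U)⁻¹ * Uᴴ) * Z)
        + ((1 - t : ℝ) : ℂ) • (Zᴴ * (T - U * (Uᴴ * T⁻¹ * U)⁻¹ * Uᴴ) * Z) := by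
    rw [e1, e2, ← e3, smul_sub, smul_sub]
    abel
  rw [key]
  exact (psd_smul ((sandwich hS hU).conjTranspose_mul_mul_same Z) ht0).add
    (psd_smul ((sandwich hT hU).conjTranspose_mul_mul_same Z) (by linarith))
lemma log_det_inv_re {X : Matrix m m ℂ} (hX : X.PosDef) :
    Real.log ((X⁻¹).det.re) = - Real.log (X.det.re) := by
  have h : (X⁻¹).det = (X.det)⁻¹ := by
    rw [det_nonsing_inv, Ring.inverse_eq_inv']
  rw [h, det_eq_re hX, ← Complex.ofReal_inv, Complex.ofReal_re, Real.log_inv,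
    Complex.ofReal_re]

end HFunAux

/-- h(S) = (1/n)∑ᵢ log det(Uᵢ* S⁻¹ Uᵢ) − log det(I+S). -/
noncomputable def hFun {N n : ℕ} {k : Fin n → ℕ}
    (U : (i : Fin n) → Matrix (Fin N) (Fin (k i)) ℂ)
    (S : Matrix (Fin N) (Fin N) ℂ) : ℝ :=
  (n : ℝ)⁻¹ * (∑ i, Real.log (((U i)ᴴ * S⁻¹ * U i).det.re)) -
    Real.log ((1 + S).det.re)

/-- The function h(S) = (1/n)∑ᵢ log det(Uᵢ* S⁻¹ Uᵢ) − log det(I+S) is convex on the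
set of Hermitian positive definite matrices. -/
theorem hFun_convex {N n : ℕ} (hN : 0 < N) (hn : 0 < n)
    {k : Fin n → ℕ} (hk1 : ∀ i, 1 ≤ k i) (hkN : ∀ i, k i ≤ N)
    (U : (i : Fin n) → Matrix (Fin N) (Fin (k i)) ℂ)
    (hU : ∀ i, (U i)ᴴ * U i = 1)
    (S T : Matrix (Fin N) (Fin N) ℂ) (hS : S.PosDef) (hT : T.PosDef)
    (t : ℝ) (ht0 : 0 ≤ t) (ht1 : t ≤ 1) :
    hFun U ((t : ℂ) • S + ((1 - t : ℝ) : ℂ) • T) ≤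
      t * hFun U S + (1 - t) * hFun U T := by
  classical
  set St := (t : ℂ) • S + ((1 - t : ℝ) : ℂ) • T with hStdef
  have hSt : St.PosDef := HFunAux.posDef_combo hS hT ht0 ht1
  have h1S : (1 + S).PosDef := Matrix.PosDef.one.add hS
  have h1T : (1 + T).PosDef := Matrix.PosDef.one.add hT
  have hc : (t : ℂ) + ((1 - t : ℝ) : ℂ) = 1 := by push_cast; ring
  have hcombo1 : (t : ℂ) • (1 + S) + ((1 - t : ℝ) : ℂ) • (1 + T) = 1 + St := by
    rw [hStdef, smul_add, smul_add, add_add_add_comm, ← add_smul, hc, one_smul]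
  have h2 : t * Real.log ((1 + S).det.re) + (1 - t) * Real.log ((1 + T).det.re)
      ≤ Real.log ((1 + St).det.re) := by
    have := HFunAux.logdet_concave h1S h1T ht0 ht1
    rwa [hcombo1] at this
  have h1 : ∀ i, Real.log (((U i)ᴴ * St⁻¹ * U i).det.re)
      ≤ t * Real.log (((U i)ᴴ * S⁻¹ * U i).det.re)
        + (1 - t) * Real.log (((U i)ᴴ * T⁻¹ * U i).det.re) := by
    intro i
    have hMS : ((U i)ᴴ * S⁻¹ * U i).PosDef := HFunAux.compress_posDef hS.inv (hU i)
    have hMT : ((U i)ᴴ * T⁻¹ * U i).PosDef := HFunAux.compress_posDef hT.inv (hU i)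
    have hMt : ((U i)ᴴ * St⁻¹ * U i).PosDef := HFunAux.compress_posDef hSt.inv (hU i)
    have hcomboPD : ((t : ℂ) • ((U i)ᴴ * S⁻¹ * U i)⁻¹
        + ((1 - t : ℝ) : ℂ) • ((U i)ᴴ * T⁻¹ * U i)⁻¹).PosDef :=
      HFunAux.posDef_combo hMS.inv hMT.inv ht0 ht1
    have a1 := HFunAux.logdet_concave hMS.inv hMT.inv ht0 ht1
    have a2 : ((t : ℂ) • ((U i)ᴴ * S⁻¹ * U i)⁻¹
          + ((1 - t : ℝ) : ℂ) • ((U i)ᴴ * T⁻¹ * U i)⁻¹).det.re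
        ≤ ((((U i)ᴴ * St⁻¹ * U i)⁻¹).det.re) :=
      HFunAux.det_re_mono hcomboPD (HFunAux.F_concave hS hT (hU i) ht0 ht1)
    have a3 := Real.log_le_log (HFunAux.det_re_pos hcomboPD) a2
    have key := a1.trans a3
    rw [HFunAux.log_det_inv_re hMS, HFunAux.log_det_inv_re hMT,
      HFunAux.log_det_inv_re hMt] at key
    linarith
  have hsum : ∑ i, Real.log (((U i)ᴴ * St⁻¹ * U i).det.re)
      ≤ t * (∑ i, Real.log (((U i)ᴴ * S⁻¹ * U i).det.re))
        + (1 - t) * (∑ i, Real.log (((U i)ᴴ * T⁻¹ * U i).det.re)) := by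
    rw [Finset.mul_sum, Finset.mul_sum, ← Finset.sum_add_distrib]
    exact Finset.sum_le_sum (fun i _ => h1 i)
  have hninv : (0:ℝ) ≤ (n:ℝ)⁻¹ := by positivity
  have hmul := mul_le_mul_of_nonneg_left hsum hninv
  simp only [hFun]
  linarith [h2, hmul]
end

section
/- Let L be an N×N Hermitian positive definite complex matrix and let U be an N×k complex matrix (1 ≤ k ≤ N) with orthonormal columns, U*U = I. Then U (U* L U)⁻¹ U* ≼ L⁻¹ in the Loewner order; i.e. L⁻¹ − U(U*LU)⁻¹U* is positive semidefinite. Consequently, with Z(L) = (1/n)∑_{i=1}^n Uᵢ(Uᵢ*LUᵢ)⁻¹Uᵢ*, one has Z(L) ≼ L⁻¹. -/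
open Matrix
open scoped ComplexOrder

lemma key_compression {N κ : ℕ} (L : Matrix (Fin N) (Fin N) ℂ) (hL : L.PosDef)
    (V : Matrix (Fin N) (Fin κ) ℂ) (hV : Vᴴ * V = 1) :
    (L⁻¹ - V * (Vᴴ * L * V)⁻¹ * Vᴴ).PosSemidef := by
  classical
  obtain ⟨S, hSH, hSS⟩ : ∃ S : Matrix (Fin N) (Fin N) ℂ, Sᴴ = S ∧ S * S = L :=
    by
      letI : PartialOrder (Matrix (Fin N) (Fin N) ℂ) := Matrix.instPartialOrder
      letI : NonnegSpectrumClass ℝ (Matrix (Fin N) (Fin N) ℂ) := Matrix.instNonnegSpectrumClass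
      obtain ⟨X, hX, -, hXX⟩ := CFC.exists_sqrt_of_isSelfAdjoint_of_quasispectrumRestricts
        hL.posSemidef.isHermitian (QuasispectrumRestricts.nnreal_of_nonneg hL.posSemidef.nonneg)
      exact ⟨X, hX.star_eq, hXX⟩
  have hLdet : IsUnit L.det := hL.det_pos.ne'.isUnit
  have hSdet : IsUnit S.det := by
    have h : S.det * S.det = L.det := by rw [← det_mul, hSS]
    exact isUnit_of_mul_isUnit_left (h ▸ hLdet)
  have hS1 : S⁻¹ * S = 1 := nonsing_inv_mul S hSdet
  have hS2 : S * S⁻¹ = 1 := mul_nonsing_inv S hSdet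
  have hVinj : ∀ x : Fin κ → ℂ, V *ᵥ x = 0 → x = 0 := by
    intro x hx
    have h : (Vᴴ * V) *ᵥ x = Vᴴ *ᵥ (V *ᵥ x) := by rw [mulVec_mulVec]
    rw [hV, one_mulVec, hx, mulVec_zero] at h
    exact h
  have hB : (Vᴴ * L * V).PosDef := by
    refine PosDef.of_dotProduct_mulVec_pos ?_ ?_
    · show (Vᴴ * L * V)ᴴ = Vᴴ * L * V
      simp [conjTranspose_mul, Matrix.mul_assoc, hL.isHermitian.eq]
    · intro x hx
      have hx' : V *ᵥ x ≠ 0 := fun h => hx (hVinj x h)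
      have h := hL.dotProduct_mulVec_pos hx'
      simpa [star_mulVec, mulVec_mulVec, dotProduct_mulVec, Matrix.mul_assoc,
        vecMul_vecMul] using h
  have hBdet : IsUnit (Vᴴ * L * V).det := hB.det_pos.ne'.isUnit
  set Bi := (Vᴴ * L * V)⁻¹ with hBidef
  have hBiH : Biᴴ = Bi := by rw [hBidef]; exact hB.isHermitian.inv.eq
  have hBi1 : Bi * (Vᴴ * L * V) = 1 := nonsing_inv_mul _ hBdet
  clear_value Bi
  set E := S * V with hEdef
  have hEH : Eᴴ = Vᴴ * S := by rw [hEdef, conjTranspose_mul, hSH]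
  have hEE : Eᴴ * E = Vᴴ * L * V := by
    rw [hEH, hEdef, Matrix.mul_assoc Vᴴ S, ← Matrix.mul_assoc S S, hSS, ← Matrix.mul_assoc]
  clear_value E
  set P := E * Bi * Eᴴ with hPdef
  have hPH : Pᴴ = P := by
    simp only [hPdef, conjTranspose_mul, conjTranspose_conjTranspose, hBiH, Matrix.mul_assoc]
  have hPP : P * P = P := by
    calc P * P = E * Bi * (Eᴴ * E) * Bi * Eᴴ := by
          rw [hPdef]; simp only [Matrix.mul_assoc]
      _ = E * (Bi * (Vᴴ * L * V)) * Bi * Eᴴ := by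
          rw [hEE]; simp only [Matrix.mul_assoc]
      _ = P := by rw [hBi1, Matrix.mul_one, hPdef]
  have hQ : (1 - P).PosSemidef := by
    have h1 : (1 - P)ᴴ * (1 - P) = 1 - P := by
      rw [conjTranspose_sub, conjTranspose_one, hPH, Matrix.sub_mul, Matrix.mul_sub,
        Matrix.mul_sub, Matrix.one_mul, Matrix.one_mul, Matrix.mul_one, hPP]
      abel
    have h2 := posSemidef_conjTranspose_mul_self (1 - P)
    rwa [h1] at h2
  have hSinvH : S⁻¹ᴴ = S⁻¹ := by rw [conjTranspose_nonsing_inv, hSH]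
  have hmain : S⁻¹ᴴ * (1 - P) * S⁻¹ = L⁻¹ - V * Bi * Vᴴ := by
    rw [hSinvH, Matrix.mul_sub, Matrix.mul_one, Matrix.sub_mul]
    congr 1
    · rw [← hSS, Matrix.mul_inv_rev]
    · calc S⁻¹ * P * S⁻¹ = (S⁻¹ * S) * (V * (Bi * (Vᴴ * (S * S⁻¹)))) := by
            rw [hPdef, hEH, hEdef]; simp only [Matrix.mul_assoc]
        _ = V * Bi * Vᴴ := by
            rw [hS1, hS2, Matrix.one_mul, Matrix.mul_one]; simp only [Matrix.mul_assoc]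
  rw [← hmain]
  exact hQ.conjTranspose_mul_mul_same S⁻¹

lemma psd_smul_inv_nat {m : ℕ} (n : ℕ) {M : Matrix (Fin m) (Fin m) ℂ}
    (hM : M.PosSemidef) : ((n : ℂ)⁻¹ • M).PosSemidef := by
  refine PosSemidef.of_dotProduct_mulVec_nonneg ?_ ?_
  · have h : ((n : ℂ)⁻¹ • M)ᴴ = star ((n : ℂ)⁻¹) • Mᴴ := conjTranspose_smul _ _
    rw [IsHermitian]
    simp [h, hM.1.eq]
  · intro x
    have h0 : (0 : ℂ) ≤ (n : ℂ)⁻¹ := by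
      rw [show ((n : ℂ)⁻¹) = (((n : ℝ)⁻¹ : ℝ) : ℂ) by push_cast; ring]
      exact_mod_cast inv_nonneg.mpr (Nat.cast_nonneg n)
    have h := hM.dotProduct_mulVec_nonneg x
    rw [smul_mulVec, dotProduct_smul]
    exact mul_nonneg h0 h

set_option maxHeartbeats 1000000 in
/-- Compression bound in the Loewner order: U(U*LU)⁻¹U* ≼ L⁻¹ for U with orthonormal
columns, and consequently Z(L) = (1/n)∑ᵢ Uᵢ(Uᵢ*LUᵢ)⁻¹Uᵢ* ≼ L⁻¹. -/
theorem compression_inv_le_inv {N n : ℕ} (hN : 0 < N) (hn : 0 < n)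
    {k : Fin n → ℕ} (hk1 : ∀ i, 1 ≤ k i) (hkN : ∀ i, k i ≤ N)
    (U : (i : Fin n) → Matrix (Fin N) (Fin (k i)) ℂ)
    (hU : ∀ i, (U i)ᴴ * U i = 1)
    (L : Matrix (Fin N) (Fin N) ℂ) (hL : L.PosDef)
    {κ : ℕ} (hκ1 : 1 ≤ κ) (hκN : κ ≤ N)
    (V : Matrix (Fin N) (Fin κ) ℂ) (hV : Vᴴ * V = 1) :
    (L⁻¹ - V * (Vᴴ * L * V)⁻¹ * Vᴴ).PosSemidef ∧
      (L⁻¹ - (n : ℂ)⁻¹ • (∑ i, U i * ((U i)ᴴ * L * U i)⁻¹ * (U i)ᴴ)).PosSemidef := by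
  refine ⟨key_compression L hL V hV, ?_⟩
  have hn0 : (n : ℂ) ≠ 0 := Nat.cast_ne_zero.mpr hn.ne'
  have hrw : L⁻¹ - (n : ℂ)⁻¹ • (∑ i, U i * ((U i)ᴴ * L * U i)⁻¹ * (U i)ᴴ)
      = (n : ℂ)⁻¹ • (∑ i, (L⁻¹ - U i * ((U i)ᴴ * L * U i)⁻¹ * (U i)ᴴ)) := by
    rw [Finset.sum_sub_distrib, smul_sub, Finset.sum_const, Finset.card_univ,
      Fintype.card_fin, ← Nat.cast_smul_eq_nsmul ℂ, inv_smul_smul₀ hn0]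
  rw [hrw]
  apply psd_smul_inv_nat
  apply Finset.sum_induction _ _ (fun a b ha hb => ha.add hb) PosSemidef.zero
  intro i _
  exact key_compression L hL (U i) (hU i)
end

section
/- Let L be an N×N Hermitian positive semidefinite complex matrix, set K = L(L+I)⁻¹ (the marginal kernel), and for Y ⊆ {1,…,N} let I_{Y^c} denote the diagonal 0/1 matrix whose (j,j) entry is 1 if j ∉ Y and 0 if j ∈ Y. Then for every Y ⊆ {1,…,N}, det(L_Y)/det(L+I) = |det(K − I_{Y^c})|, where L_Y is the principal submatrix of L with rows and columns indexed by Y (det(L_∅) = 1 by convention). -/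
open Matrix
open scoped ComplexOrder

/-- For a Hermitian positive semidefinite L, with marginal kernel K = L(L+I)⁻¹ and
I_{Y^c} the diagonal 0/1 matrix supported off Y, the DPP probability satisfies
det(L_Y)/det(L+I) = |det(K − I_{Y^c})| for every subset Y. -/
theorem dpp_prob_eq_abs_det_marginal {N : ℕ}
    (L : Matrix (Fin N) (Fin N) ℂ) (hL : L.PosSemidef) (Y : Finset (Fin N)) :
    (L.submatrix (fun i : Y => (i : Fin N)) (fun j : Y => (j : Fin N))).det /
        (L + 1).det =
      (‖(L * (L + 1)⁻¹ -
          Matrix.diagonal (fun j => if j ∈ Y then 0 else 1)).det‖ : ℂ) := by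
  set D : Matrix (Fin N) (Fin N) ℂ := Matrix.diagonal (fun j => if j ∈ Y then 0 else 1) with hD
  have hpd : (L + 1).PosDef := Matrix.PosDef.posSemidef_add hL Matrix.PosDef.one
  have hbpos : (0:ℂ) < (L + 1).det := hpd.det_pos
  have hbne : (L + 1).det ≠ 0 := hbpos.ne'
  set M : Matrix (Fin N) (Fin N) ℂ := L - D * (L + 1) with hM
  have key : (L * (L + 1)⁻¹ - D) * (L + 1) = M := by
    rw [hM, sub_mul, mul_assoc, Matrix.nonsing_inv_mul _ hbne.isUnit, mul_one]
  have hMentry : ∀ i j, M i j = if i ∈ Y then L i j else -(if i = j then 1 else 0) := by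
    intro i j
    simp only [hM, hD, Matrix.sub_apply, Matrix.diagonal_mul, Matrix.add_apply,
      Matrix.one_apply]
    by_cases hi : i ∈ Y <;> simp [hi]
  have h0 : ∀ i, ¬ (i ∈ Y) → ∀ j, (j ∈ Y) → M i j = 0 := by
    intro i hi j hj
    rw [hMentry]
    have : i ≠ j := fun h => hi (h ▸ hj)
    simp [hi, this]
  have hdetM := Matrix.twoBlockTriangular_det M (· ∈ Y) h0
  have hb1 : (M.toSquareBlockProp (· ∈ Y)) =
      L.submatrix (fun i : Y => (i : Fin N)) (fun j : Y => (j : Fin N)) := by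
    ext i j
    simp [Matrix.toSquareBlockProp, hMentry, i.2]
  have hb2 : (M.toSquareBlockProp (fun i => ¬ i ∈ Y)) = -1 := by
    ext i j
    have hi := i.2
    simp only [Matrix.toSquareBlockProp, Matrix.toBlock_apply]
    rw [hMentry, if_neg hi]
    by_cases h : i = j
    · subst h; simp
    · have h' : (i : Fin N) ≠ (j : Fin N) := fun hh => h (Subtype.ext hh)
      simp [h, h', Matrix.one_apply, Matrix.neg_apply]
  set a := (L.submatrix (fun i : Y => (i : Fin N)) (fun j : Y => (j : Fin N))).det with ha
  set b := (L + 1).det with hbdef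
  set c := (L * (L + 1)⁻¹ - D).det with hc
  set u := (M.toSquareBlockProp (fun i => ¬ i ∈ Y)).det with hudef
  have hu : ‖u‖ = 1 := by
    rw [hudef, hb2]
    rw [show (-1 : Matrix {a // ¬ a ∈ Y} {a // ¬ a ∈ Y} ℂ) = -(1:Matrix _ _ ℂ) by simp,
      Matrix.det_neg, Matrix.det_one, mul_one]
    simp
  have hcb : c * b = a * u := by
    rw [hc, hbdef, ← Matrix.det_mul, key, hdetM, hudef]
    congr! 2
  have hsub : (L.submatrix (fun i : Y => (i : Fin N)) (fun j : Y => (j : Fin N))).PosSemidef :=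
    hL.submatrix _
  have hanon : (0:ℂ) ≤ a := by
    rw [ha, hsub.isHermitian.det_eq_prod_eigenvalues]
    exact Finset.prod_nonneg fun i _ => Complex.zero_le_real.mpr (hsub.eigenvalues_nonneg i)
  have haeq : a = (‖a‖ : ℂ) := Complex.eq_coe_norm_of_nonneg hanon
  have hbeq : b = (‖b‖ : ℂ) := Complex.eq_coe_norm_of_nonneg hbpos.le
  have hbnorm : ‖b‖ ≠ 0 := norm_ne_zero_iff.mpr hbne
  have hnorm : ‖c‖ * ‖b‖ = ‖a‖ := by
    have h := congrArg norm hcb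
    rwa [norm_mul, norm_mul, hu, mul_one] at h
  rw [haeq, hbeq, ← Complex.ofReal_div]
  congr 1
  rw [div_eq_iff hbnorm]
  exact hnorm.symm
end
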